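/- arXiv:2208.00297 — 9 statements merged into one kernel-verified Lean document; each statement's English description precedes it below -/
import Mathlib

section
/- Suppose ((P^{(k)})_k, (Γ_y)_{y=0}^{C}) is P1-feasible for threshold ζ. Define α^{(k)}_i = 1 − (1/C) ∑_{y=0}^{C} y · q^{(k)}_{i, C−y}, γ_0 = (1/C) ∑_{y=0}^{C} (C−y) · Γ_y and γ_1 = (1/C) ∑_{y=0}^{C} y · Γ_y. Then ((α^{(k)}_i)_{k,i}, γ_0, γ_1) is P2-feasible for the same threshold ζ, and its objective Ω₂ = ∑_k ∑_i pg_k · p_i · (1 − α^{(k)}_i) equals the communication cost Ω of the P1-feasible point. -/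
/-- The set of feasible chunk placements:
`F = {z : Fin N → ℕ | (∀ i, z i ≤ C) ∧ ∑ i, z i = M·C}`, encoded with values in
`Fin (C+1)` (so the bound `z i ≤ C` is automatic). -/
def Feas (N C M : ℕ) : Finset (Fin N → Fin (C + 1)) :=
  Finset.univ.filter fun z => ∑ i, (z i : ℕ) = M * C

/-- `qprob P i x = ∑_{z ∈ F, z i = x} P z`, the probability of caching exactly
`x` chunks of file `i` under the cache placement distribution `P`. -/
def qprob (N C M : ℕ) (P : (Fin N → Fin (C + 1)) → ℝ) (i : Fin N) (x : ℕ) : ℝ :=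
  ∑ z ∈ (Feas N C M).filter (fun z => (z i : ℕ) = x), P z

/-- `P` is a pmf on the feasible placement set `F`. -/
def IsPmfOnFeas (N C M : ℕ) (P : (Fin N → Fin (C + 1)) → ℝ) : Prop :=
  (∀ z ∈ Feas N C M, 0 ≤ P z) ∧ ∑ z ∈ Feas N C M, P z = 1

/-- The communication cost
`Ω = (1/C) ∑_k ∑_i ∑_{y=0}^{C} pg_k · p_i · y · q^{(k)}_{i, C−y}`. -/
noncomputable def commCost (N K C M : ℕ) (p : Fin N → ℝ) (pg : Fin K → ℝ)
    (P : Fin K → (Fin N → Fin (C + 1)) → ℝ) : ℝ :=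
  (1 / (C : ℝ)) * ∑ k : Fin K, ∑ i : Fin N, ∑ y ∈ Finset.range (C + 1),
    pg k * p i * (y : ℝ) * qprob N C M (P k) i (C - y)

/-- P1-feasibility: each `P^{(k)}` is a pmf on `F`,
`Γ_y ≥ p_i · pg_k · q^{(k)}_{i,C−y}` for all `k, i, y ∈ {0,…,C}`, and
`1 − ∑_{y=0}^{C} Γ_y ≥ ζ`. -/
def P1Feasible (N K C M : ℕ) (p : Fin N → ℝ) (pg : Fin K → ℝ) (ζ : ℝ)
    (P : Fin K → (Fin N → Fin (C + 1)) → ℝ) (Γ : ℕ → ℝ) : Prop :=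
  (∀ k, IsPmfOnFeas N C M (P k)) ∧
  (∀ (k : Fin K) (i : Fin N), ∀ y ∈ Finset.range (C + 1),
    Γ y ≥ p i * pg k * qprob N C M (P k) i (C - y)) ∧
  1 - ∑ y ∈ Finset.range (C + 1), Γ y ≥ ζ

/-- P2-feasibility: `0 ≤ α^{(k)}_i ≤ 1`, `∑_i α^{(k)}_i = M` for every `k`,
`γ_0 ≥ pg_k · p_i · α^{(k)}_i`, `γ_1 ≥ pg_k · p_i · (1 − α^{(k)}_i)`, and
`1 − γ_0 − γ_1 ≥ ζ`. -/
def P2Feasible (N K M : ℕ) (p : Fin N → ℝ) (pg : Fin K → ℝ) (ζ : ℝ)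
    (α : Fin K → Fin N → ℝ) (γ0 γ1 : ℝ) : Prop :=
  (∀ k i, 0 ≤ α k i ∧ α k i ≤ 1) ∧
  (∀ k, ∑ i, α k i = (M : ℝ)) ∧
  (∀ k i, γ0 ≥ pg k * p i * α k i) ∧
  (∀ k i, γ1 ≥ pg k * p i * (1 - α k i)) ∧
  1 - γ0 - γ1 ≥ ζ

lemma q_sum_gen (N C M : ℕ) (P : (Fin N → Fin (C + 1)) → ℝ) (i : Fin N)
    (f : ℕ → ℝ) :
    ∑ x ∈ Finset.range (C + 1), f x * qprob N C M P i x
      = ∑ z ∈ Feas N C M, f (z i) * P z := by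
  rw [← Finset.sum_fiberwise_of_maps_to (g := fun z => ((z i : ℕ)))
      (t := Finset.range (C + 1))
      (fun z _ => Finset.mem_range.mpr (z i).isLt) (fun z => f (z i) * P z)]
  unfold qprob
  refine Finset.sum_congr rfl fun x _ => ?_
  rw [Finset.mul_sum]
  refine Finset.sum_congr rfl fun z hz => ?_
  rw [(Finset.mem_filter.mp hz).2]

lemma refl_sum (C : ℕ) (f : ℕ → ℝ) :
    ∑ y ∈ Finset.range (C + 1), f (C - y) = ∑ y ∈ Finset.range (C + 1), f y := by
  have := Finset.sum_range_reflect f (C + 1)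
  simpa using this

/-- Lemma 1, first step: a P1-feasible point yields a P2-feasible point with
the same communication cost, via
`α^{(k)}_i = 1 − (1/C) ∑_{y=0}^{C} y · q^{(k)}_{i,C−y}`,
`γ_0 = (1/C) ∑_{y=0}^{C} (C−y) · Γ_y` and `γ_1 = (1/C) ∑_{y=0}^{C} y · Γ_y`. -/
theorem stmt1 (N K C M : ℕ) (hN : 1 ≤ N) (hK : 1 ≤ K) (hC : 1 ≤ C)
    (hM : 1 ≤ M) (hMN : M ≤ N)
    (p : Fin N → ℝ) (hp0 : ∀ i, 0 ≤ p i) (hp1 : ∑ i, p i = 1)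
    (pg : Fin K → ℝ) (hpg0 : ∀ k, 0 ≤ pg k) (hpg1 : ∑ k, pg k = 1)
    (ζ : ℝ) (P : Fin K → (Fin N → Fin (C + 1)) → ℝ) (Γ : ℕ → ℝ)
    (hfeas : P1Feasible N K C M p pg ζ P Γ)
    (α : Fin K → Fin N → ℝ)
    (hα : ∀ k i, α k i =
      1 - (1 / (C : ℝ)) * ∑ y ∈ Finset.range (C + 1),
        (y : ℝ) * qprob N C M (P k) i (C - y))
    (γ0 γ1 : ℝ)
    (hγ0 : γ0 = (1 / (C : ℝ)) * ∑ y ∈ Finset.range (C + 1), ((C : ℝ) - (y : ℝ)) * Γ y)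
    (hγ1 : γ1 = (1 / (C : ℝ)) * ∑ y ∈ Finset.range (C + 1), (y : ℝ) * Γ y) :
    P2Feasible N K M p pg ζ α γ0 γ1 ∧
    ∑ k : Fin K, ∑ i : Fin N, pg k * p i * (1 - α k i)
      = commCost N K C M p pg P := by
  obtain ⟨hP, hΓ, hζ⟩ := hfeas
  have hCR : (0 : ℝ) < C := by exact_mod_cast hC
  set T : Fin K → Fin N → ℝ :=
    fun k i => ∑ x ∈ Finset.range (C + 1), (x : ℝ) * qprob N C M (P k) i x with hTdef
  have hq0 : ∀ k i x, 0 ≤ qprob N C M (P k) i x := fun k i x =>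
    Finset.sum_nonneg fun z hz => (hP k).1 z (Finset.mem_of_mem_filter z hz)
  have hq1 : ∀ k i, ∑ x ∈ Finset.range (C + 1), qprob N C M (P k) i x = 1 := by
    intro k i
    have h := q_sum_gen N C M (P k) i (fun _ => 1)
    simp only [one_mul] at h
    rw [h, (hP k).2]
  have hqr : ∀ k i, ∑ y ∈ Finset.range (C + 1), qprob N C M (P k) i (C - y) = 1 := by
    intro k i
    rw [refl_sum C (fun x => qprob N C M (P k) i x)]
    exact hq1 k i
  have hS : ∀ k i, ∑ y ∈ Finset.range (C + 1), (y : ℝ) * qprob N C M (P k) i (C - y)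
      = (C : ℝ) - T k i := by
    intro k i
    have h1 := refl_sum C (fun y => (y : ℝ) * qprob N C M (P k) i (C - y))
    rw [← h1]
    have h2 : ∀ y ∈ Finset.range (C + 1),
        ((C - y : ℕ) : ℝ) * qprob N C M (P k) i (C - (C - y))
          = ((C : ℝ) - y) * qprob N C M (P k) i y := by
      intro y hy
      have hy' : y ≤ C := Nat.lt_succ_iff.mp (Finset.mem_range.mp hy)
      rw [Nat.sub_sub_self hy', Nat.cast_sub hy']
    rw [Finset.sum_congr rfl h2]
    have : ∑ y ∈ Finset.range (C + 1), ((C : ℝ) - y) * qprob N C M (P k) i y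
        = (C : ℝ) * ∑ y ∈ Finset.range (C + 1), qprob N C M (P k) i y
          - ∑ y ∈ Finset.range (C + 1), (y : ℝ) * qprob N C M (P k) i y := by
      rw [Finset.mul_sum, ← Finset.sum_sub_distrib]
      exact Finset.sum_congr rfl fun y _ => by ring
    rw [this, hq1, mul_one]
  have hα' : ∀ k i, α k i = T k i / C := by
    intro k i
    rw [hα, hS]
    field_simp
    ring
  have hT0 : ∀ k i, 0 ≤ T k i := fun k i =>
    Finset.sum_nonneg fun x _ => mul_nonneg (Nat.cast_nonneg x) (hq0 k i x)
  have hTC : ∀ k i, T k i ≤ C := by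
    intro k i
    calc T k i ≤ ∑ x ∈ Finset.range (C + 1), (C : ℝ) * qprob N C M (P k) i x := by
          refine Finset.sum_le_sum fun x hx => ?_
          have hx' : (x : ℝ) ≤ C := by
            exact_mod_cast Nat.lt_succ_iff.mp (Finset.mem_range.mp hx)
          exact mul_le_mul_of_nonneg_right hx' (hq0 k i x)
      _ = C := by rw [← Finset.mul_sum, hq1, mul_one]
  have hTsum : ∀ k, ∑ i, T k i = (M : ℝ) * C := by
    intro k
    have h1 : ∑ i, T k i = ∑ i, ∑ z ∈ Feas N C M, ((z i : ℕ) : ℝ) * P k z :=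
      Finset.sum_congr rfl fun i _ => q_sum_gen N C M (P k) i (fun n => (n : ℝ))
    rw [h1, Finset.sum_comm]
    have h2 : ∀ z ∈ Feas N C M, ∑ i, ((z i : ℕ) : ℝ) * P k z = ((M : ℝ) * C) * P k z := by
      intro z hz
      rw [← Finset.sum_mul]
      congr 1
      have h := (Finset.mem_filter.mp hz).2
      exact_mod_cast congrArg (fun n : ℕ => (n : ℝ)) h
    rw [Finset.sum_congr rfl h2, ← Finset.mul_sum, (hP k).2, mul_one]
  -- key inequality sums
  have hγ0key : ∀ (k : Fin K) (i : Fin N),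
      p i * pg k * T k i ≤ ∑ y ∈ Finset.range (C + 1), ((C : ℝ) - y) * Γ y := by
    intro k i
    have h1 : ∑ y ∈ Finset.range (C + 1),
        ((C : ℝ) - y) * (p i * pg k * qprob N C M (P k) i (C - y))
          = p i * pg k * T k i := by
      have := hS k i
      have := hqr k i
      calc ∑ y ∈ Finset.range (C + 1),
            ((C : ℝ) - y) * (p i * pg k * qprob N C M (P k) i (C - y))
          = (p i * pg k) * ((C : ℝ) *
              (∑ y ∈ Finset.range (C + 1), qprob N C M (P k) i (C - y))
            - ∑ y ∈ Finset.range (C + 1), (y : ℝ) * qprob N C M (P k) i (C - y)) := by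
            rw [Finset.mul_sum, mul_sub, Finset.mul_sum, Finset.mul_sum,
              ← Finset.sum_sub_distrib]
            exact Finset.sum_congr rfl fun y _ => by ring
        _ = p i * pg k * T k i := by rw [hS k i, hqr k i]; ring
    rw [← h1]
    refine Finset.sum_le_sum fun y hy => ?_
    have hy' : (y : ℝ) ≤ C := by
      exact_mod_cast Nat.lt_succ_iff.mp (Finset.mem_range.mp hy)
    exact mul_le_mul_of_nonneg_left (hΓ k i y hy) (by linarith)
  have hγ1key : ∀ (k : Fin K) (i : Fin N),
      p i * pg k * ((C : ℝ) - T k i) ≤ ∑ y ∈ Finset.range (C + 1), (y : ℝ) * Γ y := by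
    intro k i
    have h1 : ∑ y ∈ Finset.range (C + 1),
        (y : ℝ) * (p i * pg k * qprob N C M (P k) i (C - y))
          = p i * pg k * ((C : ℝ) - T k i) := by
      rw [← hS k i, Finset.mul_sum]
      exact Finset.sum_congr rfl fun y _ => by ring
    rw [← h1]
    refine Finset.sum_le_sum fun y hy => ?_
    exact mul_le_mul_of_nonneg_left (hΓ k i y hy) (Nat.cast_nonneg y)
  refine ⟨⟨?_, ?_, ?_, ?_, ?_⟩, ?_⟩
  · intro k i
    rw [hα' k i]
    exact ⟨div_nonneg (hT0 k i) hCR.le, (div_le_one hCR).mpr (hTC k i)⟩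
  · intro k
    have : ∑ i, α k i = (∑ i, T k i) / C := by
      rw [Finset.sum_div]
      exact Finset.sum_congr rfl fun i _ => hα' k i
    rw [this, hTsum k]
    field_simp
  · intro k i
    rw [hγ0, hα' k i]
    have h := mul_le_mul_of_nonneg_left (hγ0key k i) (by positivity : (0:ℝ) ≤ 1 / C)
    have he : pg k * p i * (T k i / C) = (1 / (C:ℝ)) * (p i * pg k * T k i) := by
      ring
    rw [he]
    exact h
  · intro k i
    rw [hγ1, hα' k i]
    have h := mul_le_mul_of_nonneg_left (hγ1key k i) (by positivity : (0:ℝ) ≤ 1 / C)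
    have h1 : (1:ℝ) - T k i / C = ((C:ℝ) - T k i) / C := by field_simp
    have he : pg k * p i * (1 - T k i / C)
        = (1 / (C:ℝ)) * (p i * pg k * ((C:ℝ) - T k i)) := by
      rw [h1]; ring
    rw [he]
    exact h
  · have hsum : γ0 + γ1 = ∑ y ∈ Finset.range (C + 1), Γ y := by
      rw [hγ0, hγ1, ← mul_add, ← Finset.sum_add_distrib]
      have : ∑ y ∈ Finset.range (C + 1), (((C : ℝ) - y) * Γ y + (y : ℝ) * Γ y)
          = (C : ℝ) * ∑ y ∈ Finset.range (C + 1), Γ y := by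
        rw [Finset.mul_sum]
        exact Finset.sum_congr rfl fun y _ => by ring
      rw [this]
      field_simp
    linarith
  · unfold commCost
    rw [Finset.mul_sum]
    refine Finset.sum_congr rfl fun k _ => ?_
    rw [Finset.mul_sum]
    refine Finset.sum_congr rfl fun i _ => ?_
    have hin : ∑ y ∈ Finset.range (C + 1),
        pg k * p i * (y : ℝ) * qprob N C M (P k) i (C - y)
          = pg k * p i * ((C : ℝ) - T k i) := by
      rw [← hS k i, Finset.mul_sum]
      exact Finset.sum_congr rfl fun y _ => by ring
    have h1 : (1:ℝ) - T k i / C = ((C:ℝ) - T k i) / C := by field_simp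
    rw [hin, hα' k i, h1]
    ring
end

section
/- Let N and M be natural numbers with M ≤ N, and let α : Fin N → ℝ satisfy 0 ≤ α_i ≤ 1 for every i and ∑_{i} α_i = M. Then there exists a probability mass function Q on the collection of M-element subsets of Fin N (i.e., Q S ≥ 0 and ∑_{S : |S| = M} Q S = 1) such that for every i ∈ Fin N, ∑_{S : |S| = M, i ∈ S} Q S = α_i. -/
open Finset

/-- Auxiliary lemma: induction on the number of fractional coordinates. -/
lemma dpc_aux (N M : ℕ) :
    ∀ k : ℕ, ∀ α : Fin N → ℝ,
      (Finset.univ.filter fun i => α i ≠ 0 ∧ α i ≠ 1).card ≤ k →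
      (∀ i, 0 ≤ α i ∧ α i ≤ 1) → ∑ i, α i = (M : ℝ) →
      ∃ Q : Finset (Fin N) → ℝ,
        (∀ S : Finset (Fin N), S.card = M → 0 ≤ Q S) ∧
        (∑ S ∈ Finset.univ.filter (fun S : Finset (Fin N) => S.card = M), Q S = 1) ∧
        (∀ i : Fin N,
          ∑ S ∈ Finset.univ.filter
            (fun S : Finset (Fin N) => S.card = M ∧ i ∈ S), Q S = α i) := by
  intro k
  induction k with
  | zero =>
    intro α hcard h01 hsum
    have hempty : (Finset.univ.filter fun i => α i ≠ 0 ∧ α i ≠ 1) = ∅ :=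
      Finset.card_eq_zero.mp (Nat.le_zero.mp hcard)
    have hdich : ∀ i, α i = 0 ∨ α i = 1 := by
      intro i
      by_contra h
      push_neg at h
      have : i ∈ (Finset.univ.filter fun i => α i ≠ 0 ∧ α i ≠ 1) := by
        simp [h.1, h.2]
      simp [hempty] at this
    set T := Finset.univ.filter (fun i => α i = 1) with hTdef
    have hTsum : (T.card : ℝ) = (M : ℝ) := by
      rw [← hsum]
      have h1 : ∑ i ∈ T, α i = ∑ i, α i := by
        refine Finset.sum_subset (Finset.subset_univ _) ?_
        intro x _ hx
        rcases hdich x with h | h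
        · exact h
        · exact absurd (Finset.mem_filter.mpr ⟨Finset.mem_univ x, h⟩) hx
      have h2 : ∑ i ∈ T, α i = T.card := by
        rw [Finset.sum_congr rfl (fun x hx => (Finset.mem_filter.mp hx).2)]
        simp; rfl
      rw [← h1, h2]
    have hTcard : T.card = M := by exact_mod_cast hTsum
    refine ⟨fun S => if S = T then 1 else 0, ?_, ?_, ?_⟩
    · intro S _
      by_cases h : S = T <;> simp [h]
    · rw [Finset.sum_ite_eq' _ T (fun _ => (1 : ℝ))]
      simp [hTcard]
    · intro i
      rw [Finset.sum_ite_eq' _ T (fun _ => (1 : ℝ))]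
      by_cases hi : i ∈ T
      · simp [hi, hTcard, (Finset.mem_filter.mp hi).2]
      · have hαi : α i = 0 := by
          rcases hdich i with h | h
          · exact h
          · exact absurd (Finset.mem_filter.mpr ⟨Finset.mem_univ i, h⟩) hi
        simp [hi, hTcard, hαi]
  | succ k ih =>
    intro α hcard h01 hsum
    by_cases hk : (Finset.univ.filter fun i => α i ≠ 0 ∧ α i ≠ 1).card ≤ k
    · exact ih α hk h01 hsum
    push_neg at hk
    -- the fractional set is nonempty; pick j fractional
    have hne : (Finset.univ.filter fun i => α i ≠ 0 ∧ α i ≠ 1).Nonempty := by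
      rw [← Finset.card_pos]; omega
    obtain ⟨j, hj⟩ := hne
    have hj' := (Finset.mem_filter.mp hj).2
    -- there must be a second fractional index
    have hexists : ∃ i, i ≠ j ∧ α i ≠ 0 ∧ α i ≠ 1 := by
      by_contra h
      push_neg at h
      have hdich : ∀ x, x ≠ j → α x = 0 ∨ α x = 1 := by
        intro x hx
        by_contra hc
        push_neg at hc
        exact hc.2 (h x hx hc.1)
      set c := ((Finset.univ.erase j).filter (fun x => α x = 1)).card with hcdef
      have hsum_erase : ∑ x ∈ Finset.univ.erase j, α x = (c : ℝ) := by
        have h1 : ∑ x ∈ (Finset.univ.erase j).filter (fun x => α x = 1), α x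
            = ∑ x ∈ Finset.univ.erase j, α x := by
          refine Finset.sum_subset (Finset.filter_subset _ _) ?_
          intro x hx hx'
          rcases hdich x (Finset.ne_of_mem_erase hx) with h | h
          · exact h
          · exact absurd (Finset.mem_filter.mpr ⟨hx, h⟩) hx'
        have h2 : ∑ x ∈ (Finset.univ.erase j).filter (fun x => α x = 1), α x
            = (c : ℝ) := by
          rw [Finset.sum_congr rfl (fun x hx => (Finset.mem_filter.mp hx).2)]
          simp; rfl
        rw [← h1, h2]
      have htot : ∑ x ∈ Finset.univ.erase j, α x + α j = (M : ℝ) := by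
        rw [Finset.sum_erase_add _ _ (Finset.mem_univ j)]; exact hsum
      have hαj : α j = (M : ℝ) - c := by rw [hsum_erase] at htot; linarith
      have h0 : 0 < α j := lt_of_le_of_ne (h01 j).1 (Ne.symm hj'.1)
      have h1 : α j < 1 := lt_of_le_of_ne (h01 j).2 hj'.2
      have hcM : (c : ℝ) < M := by linarith
      have hMc : (M : ℝ) < (c : ℝ) + 1 := by linarith
      have : c < M := by exact_mod_cast hcM
      have : M < c + 1 := by exact_mod_cast hMc
      omega
    obtain ⟨i, hij, hi0', hi1'⟩ := hexists
    have hi0 : 0 < α i := lt_of_le_of_ne (h01 i).1 (Ne.symm hi0')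
    have hi1 : α i < 1 := lt_of_le_of_ne (h01 i).2 hi1'
    have hj0 : 0 < α j := lt_of_le_of_ne (h01 j).1 (Ne.symm hj'.1)
    have hj1 : α j < 1 := lt_of_le_of_ne (h01 j).2 hj'.2
    set t1 := min (1 - α i) (α j) with ht1def
    set t2 := min (α i) (1 - α j) with ht2def
    have ht1 : 0 < t1 := lt_min (by linarith) hj0
    have ht2 : 0 < t2 := lt_min hi0 (by linarith)
    have ht1a : t1 ≤ 1 - α i := min_le_left _ _
    have ht1b : t1 ≤ α j := min_le_right _ _
    have ht2a : t2 ≤ α i := min_le_left _ _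
    have ht2b : t2 ≤ 1 - α j := min_le_right _ _
    set β : Fin N → ℝ := fun x => if x = i then α i + t1 else if x = j then α j - t1 else α x
      with hβdef
    set γ : Fin N → ℝ := fun x => if x = i then α i - t2 else if x = j then α j + t2 else α x
      with hγdef
    have hβi : β i = α i + t1 := by simp [hβdef]
    have hβj : β j = α j - t1 := by simp [hβdef, hij.symm, Ne.symm hij]
    have hγi : γ i = α i - t2 := by simp [hγdef]
    have hγj : γ j = α j + t2 := by simp [hγdef, hij.symm, Ne.symm hij]
    have hβoff : ∀ x, x ≠ i → x ≠ j → β x = α x := by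
      intro x hxi hxj; simp [hβdef, hxi, hxj]
    have hγoff : ∀ x, x ≠ i → x ≠ j → γ x = α x := by
      intro x hxi hxj; simp [hγdef, hxi, hxj]
    -- bounds
    have hβ01 : ∀ x, 0 ≤ β x ∧ β x ≤ 1 := by
      intro x
      by_cases hxi : x = i
      · subst hxi; rw [hβi]; constructor <;> linarith
      by_cases hxj : x = j
      · subst hxj; rw [hβj]; constructor <;> linarith
      · rw [hβoff x hxi hxj]; exact h01 x
    have hγ01 : ∀ x, 0 ≤ γ x ∧ γ x ≤ 1 := by
      intro x
      by_cases hxi : x = i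
      · subst hxi; rw [hγi]; constructor <;> linarith
      by_cases hxj : x = j
      · subst hxj; rw [hγj]; constructor <;> linarith
      · rw [hγoff x hxi hxj]; exact h01 x
    -- sums
    have hsum_diff : ∀ (δ : Fin N → ℝ) (t : ℝ), δ i = α i + t → δ j = α j - t →
        (∀ x, x ≠ i → x ≠ j → δ x = α x) → ∑ x, δ x = (M : ℝ) := by
      intro δ t hdi hdj hoff
      have h1 : ∑ x ∈ ({i, j} : Finset (Fin N)), (δ x - α x) = ∑ x, (δ x - α x) := by
        refine Finset.sum_subset (Finset.subset_univ _) ?_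
        intro x _ hx
        simp only [Finset.mem_insert, Finset.mem_singleton] at hx
        push_neg at hx
        rw [hoff x hx.1 hx.2, sub_self]
      have h2 : ∑ x ∈ ({i, j} : Finset (Fin N)), (δ x - α x) = 0 := by
        rw [Finset.sum_pair hij, hdi, hdj]; ring
      have h3 : ∑ x, (δ x - α x) = 0 := by rw [← h1, h2]
      rw [Finset.sum_sub_distrib] at h3
      linarith [hsum]
    have hβsum : ∑ x, β x = (M : ℝ) := hsum_diff β t1 hβi hβj hβoff
    have hγsum : ∑ x, γ x = (M : ℝ) :=
      hsum_diff γ (-t2) (by rw [hγi]; ring) (by rw [hγj]; ring) hγoff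
    -- fractional count of α is exactly k+1
    have hcard' : (Finset.univ.filter fun x => α x ≠ 0 ∧ α x ≠ 1).card = k + 1 := by omega
    have hmemi : i ∈ (Finset.univ.filter fun x => α x ≠ 0 ∧ α x ≠ 1) := by
      simp [hi0', hi1']
    -- generic cardinality argument
    have hcard_gen : ∀ (δ : Fin N → ℝ) (a : Fin N),
        a ∈ (Finset.univ.filter fun x => α x ≠ 0 ∧ α x ≠ 1) →
        (δ a = 0 ∨ δ a = 1) →
        (∀ x, x ≠ a → (δ x ≠ 0 ∧ δ x ≠ 1) → (α x ≠ 0 ∧ α x ≠ 1)) →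
        (Finset.univ.filter fun x => δ x ≠ 0 ∧ δ x ≠ 1).card ≤ k := by
      intro δ a ha hda hoff
      have hsub : (Finset.univ.filter fun x => δ x ≠ 0 ∧ δ x ≠ 1) ⊆
          (Finset.univ.filter fun x => α x ≠ 0 ∧ α x ≠ 1).erase a := by
        intro x hx
        have hx' := (Finset.mem_filter.mp hx).2
        have hxa : x ≠ a := by
          intro h; subst h
          rcases hda with h | h
          · exact hx'.1 h
          · exact hx'.2 h
        exact Finset.mem_erase.mpr ⟨hxa, Finset.mem_filter.mpr ⟨Finset.mem_univ x,
          hoff x hxa hx'⟩⟩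
      calc (Finset.univ.filter fun x => δ x ≠ 0 ∧ δ x ≠ 1).card
          ≤ ((Finset.univ.filter fun x => α x ≠ 0 ∧ α x ≠ 1).erase a).card :=
            Finset.card_le_card hsub
        _ = k := by rw [Finset.card_erase_of_mem ha, hcard']; omega
    have hβfrac_aux : ∀ x, x ≠ i → x ≠ j → (β x ≠ 0 ∧ β x ≠ 1) → (α x ≠ 0 ∧ α x ≠ 1) := by
      intro x hxi hxj h; rwa [hβoff x hxi hxj] at h
    have hγfrac_aux : ∀ x, x ≠ i → x ≠ j → (γ x ≠ 0 ∧ γ x ≠ 1) → (α x ≠ 0 ∧ α x ≠ 1) := by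
      intro x hxi hxj h; rwa [hγoff x hxi hxj] at h
    have hβcard : (Finset.univ.filter fun x => β x ≠ 0 ∧ β x ≠ 1).card ≤ k := by
      rcases le_or_gt (1 - α i) (α j) with h | h
      · -- t1 = 1 - α i, β i = 1
        refine hcard_gen β i hmemi (Or.inr ?_) ?_
        · rw [hβi, ht1def, min_eq_left h]; ring
        · intro x hxi hx
          by_cases hxj : x = j
          · subst hxj; exact hj'
          · exact hβfrac_aux x hxi hxj hx
      · -- t1 = α j, β j = 0
        refine hcard_gen β j hj (Or.inl ?_) ?_
        · rw [hβj, ht1def, min_eq_right h.le]; ring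
        · intro x hxj hx
          by_cases hxi : x = i
          · subst hxi; exact ⟨hi0', hi1'⟩
          · exact hβfrac_aux x hxi hxj hx
    have hγcard : (Finset.univ.filter fun x => γ x ≠ 0 ∧ γ x ≠ 1).card ≤ k := by
      rcases le_or_gt (α i) (1 - α j) with h | h
      · -- t2 = α i, γ i = 0
        refine hcard_gen γ i hmemi (Or.inl ?_) ?_
        · rw [hγi, ht2def, min_eq_left h]; ring
        · intro x hxi hx
          by_cases hxj : x = j
          · subst hxj; exact hj'
          · exact hγfrac_aux x hxi hxj hx
      · -- t2 = 1 - α j, γ j = 1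
        refine hcard_gen γ j hj (Or.inr ?_) ?_
        · rw [hγj, ht2def, min_eq_right h.le]; ring
        · intro x hxj hx
          by_cases hxi : x = i
          · subst hxi; exact ⟨hi0', hi1'⟩
          · exact hγfrac_aux x hxi hxj hx
    obtain ⟨Q1, hQ1pos, hQ1sum, hQ1marg⟩ := ih β hβcard hβ01 hβsum
    obtain ⟨Q2, hQ2pos, hQ2sum, hQ2marg⟩ := ih γ hγcard hγ01 hγsum
    have ht12 : 0 < t1 + t2 := by linarith
    set c1 := t2 / (t1 + t2) with hc1def
    set c2 := t1 / (t1 + t2) with hc2def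
    have hc1 : 0 ≤ c1 := div_nonneg ht2.le ht12.le
    have hc2 : 0 ≤ c2 := div_nonneg ht1.le ht12.le
    have hc12 : c1 + c2 = 1 := by
      rw [hc1def, hc2def]; field_simp; ring
    have hbal : c1 * t1 = c2 * t2 := by
      rw [hc1def, hc2def]; field_simp
    refine ⟨fun S => c1 * Q1 S + c2 * Q2 S, ?_, ?_, ?_⟩
    · intro S hS
      have := hQ1pos S hS
      have := hQ2pos S hS
      positivity
    · rw [Finset.sum_add_distrib, ← Finset.mul_sum, ← Finset.mul_sum, hQ1sum, hQ2sum]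
      simpa using hc12
    · intro x
      rw [Finset.sum_add_distrib, ← Finset.mul_sum, ← Finset.mul_sum, hQ1marg, hQ2marg]
      by_cases hxi : x = i
      · subst hxi; rw [hβi, hγi]; linear_combination α x * hc12 + hbal
      by_cases hxj : x = j
      · subst hxj; rw [hβj, hγj]; linear_combination α x * hc12 - hbal
      · rw [hβoff x hxi hxj, hγoff x hxi hxj]; linear_combination α x * hc12

/-- Validity of the DPC interval-filling placement strategy: per-file caching
probabilities `α_i ∈ [0,1]` summing to `M` can be realized as the inclusion
marginals of a probability mass function `Q` on the `M`-element subsets of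
`Fin N`. -/
theorem stmt2 (N M : ℕ) (hMN : M ≤ N)
    (α : Fin N → ℝ) (hα01 : ∀ i, 0 ≤ α i ∧ α i ≤ 1)
    (hαsum : ∑ i, α i = (M : ℝ)) :
    ∃ Q : Finset (Fin N) → ℝ,
      (∀ S : Finset (Fin N), S.card = M → 0 ≤ Q S) ∧
      (∑ S ∈ Finset.univ.filter (fun S : Finset (Fin N) => S.card = M), Q S = 1) ∧
      (∀ i : Fin N,
        ∑ S ∈ Finset.univ.filter
          (fun S : Finset (Fin N) => S.card = M ∧ i ∈ S), Q S = α i) := by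
  exact dpc_aux N M N α (le_trans (Finset.card_filter_le _ _) (by simp)) hα01 hαsum
end

section
/- Suppose ((α^{(k)}_i)_{k,i}, γ_0, γ_1) is P2-feasible for threshold ζ, and for each cache k let Q^{(k)} be a pmf on the M-element subsets of Fin N whose inclusion marginals equal α^{(k)} (i.e., ∑_{S ∋ i} Q^{(k)} S = α^{(k)}_i for every i). Define the pmf P^{(k)} on F by P^{(k)} z = Q^{(k)} S when z is the placement with z i = C for i ∈ S and z i = 0 otherwise, and P^{(k)} z = 0 for every placement z having some z i ∉ {0, C}; define Γ_0 = γ_0, Γ_C = γ_1, and Γ_y = 0 for 0 < y < C. Then ((P^{(k)})_k, (Γ_y)_{y=0}^{C}) is P1-feasible for the same threshold ζ, and its communication cost Ω equals the P2 objective Ω₂ = ∑_k ∑_i pg_k · p_i · (1 − α^{(k)}_i). -/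
/-- Lemma 1, second step: a P2-feasible point, together with pmfs `Q^{(k)}`
on the `M`-element subsets of `Fin N` whose inclusion marginals equal
`α^{(k)}`, yields a P1-feasible point whose placements cache each file either
entirely or not at all, with the same communication cost. Here `P^{(k)} z`
equals `Q^{(k)} S` when `z i = C` for `i ∈ S` and `z i = 0` otherwise, and `0`
for placements having some `z i ∉ {0, C}`; `Γ_0 = γ_0`, `Γ_C = γ_1`, and
`Γ_y = 0` for `0 < y < C`. -/
theorem stmt3 (N K C M : ℕ) (hN : 1 ≤ N) (hK : 1 ≤ K) (hC : 1 ≤ C)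
    (hM : 1 ≤ M) (hMN : M ≤ N)
    (p : Fin N → ℝ) (hp0 : ∀ i, 0 ≤ p i) (hp1 : ∑ i, p i = 1)
    (pg : Fin K → ℝ) (hpg0 : ∀ k, 0 ≤ pg k) (hpg1 : ∑ k, pg k = 1)
    (ζ : ℝ) (α : Fin K → Fin N → ℝ) (γ0 γ1 : ℝ)
    (hfeas : P2Feasible N K M p pg ζ α γ0 γ1)
    (Q : Fin K → Finset (Fin N) → ℝ)
    (hQ0 : ∀ (k : Fin K) (S : Finset (Fin N)), S.card = M → 0 ≤ Q k S)
    (hQ1 : ∀ k : Fin K,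
      ∑ S ∈ Finset.univ.filter (fun S : Finset (Fin N) => S.card = M), Q k S = 1)
    (hQmarg : ∀ (k : Fin K) (i : Fin N),
      ∑ S ∈ Finset.univ.filter
        (fun S : Finset (Fin N) => S.card = M ∧ i ∈ S), Q k S = α k i)
    (P : Fin K → (Fin N → Fin (C + 1)) → ℝ)
    (hP : ∀ (k : Fin K) (z : Fin N → Fin (C + 1)),
      P k z = if ∀ i, (z i : ℕ) = 0 ∨ (z i : ℕ) = C
        then Q k (Finset.univ.filter fun i => (z i : ℕ) = C) else 0)
    (Γ : ℕ → ℝ)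
    (hΓ0 : Γ 0 = γ0) (hΓC : Γ C = γ1)
    (hΓmid : ∀ y : ℕ, 0 < y → y < C → Γ y = 0) :
    P1Feasible N K C M p pg ζ P Γ ∧
    commCost N K C M p pg P
      = ∑ k : Fin K, ∑ i : Fin N, pg k * p i * (1 - α k i) := by
  classical
  obtain ⟨hα01, hαsum, hγ0, hγ1, hζ⟩ := hfeas
  have hCpos : 0 < C := hC
  have hCne : (C : ℝ) ≠ 0 := by positivity
  set Sof : (Fin N → Fin (C + 1)) → Finset (Fin N) :=
    fun z => Finset.univ.filter fun i => (z i : ℕ) = C with hSofdef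
  set e : Finset (Fin N) → (Fin N → Fin (C + 1)) :=
    fun S i => if i ∈ S then ⟨C, Nat.lt_succ_self C⟩ else 0 with hedef
  have heval : ∀ (S : Finset (Fin N)) (i : Fin N),
      ((e S i : ℕ)) = if i ∈ S then C else 0 := by
    intro S i
    by_cases h : i ∈ S <;> simp [hedef, h]
  have hmemSof : ∀ (z : Fin N → Fin (C + 1)) (i : Fin N),
      i ∈ Sof z ↔ (z i : ℕ) = C := by
    intro z i; simp [hSofdef]
  have hcard : ∀ z : Fin N → Fin (C + 1), (∑ i, (z i : ℕ) = M * C) →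
      (∀ i, (z i : ℕ) = 0 ∨ (z i : ℕ) = C) → (Sof z).card = M := by
    intro z hsum hzc
    have hs : ∑ i, (z i : ℕ) = (Sof z).card * C := by
      rw [Finset.card_eq_sum_ones, Finset.sum_mul, one_mul, hSofdef,
        Finset.sum_filter]
      refine Finset.sum_congr rfl fun i _ => ?_
      rcases hzc i with h | h
      · rw [h, if_neg (by omega)]
      · rw [h, if_pos rfl]
    have : (Sof z).card * C = M * C := by omega
    exact Nat.eq_of_mul_eq_mul_right hCpos this
  -- core change-of-variables lemma
  have core : ∀ f : Finset (Fin N) → ℝ,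
      (∑ z ∈ Feas N C M, if ∀ i, (z i : ℕ) = 0 ∨ (z i : ℕ) = C
        then f (Sof z) else 0)
      = ∑ S ∈ Finset.univ.filter (fun S : Finset (Fin N) => S.card = M), f S := by
    intro f
    rw [← Finset.sum_filter]
    refine Finset.sum_bij' (fun z _ => Sof z) (fun S _ => e S) ?_ ?_ ?_ ?_ ?_
    · intro z hz
      simp only [Finset.mem_filter, Feas, Finset.mem_univ, true_and] at hz
      simp only [Finset.mem_filter, Finset.mem_univ, true_and]
      exact hcard z hz.1 hz.2
    · intro S hS
      simp only [Finset.mem_filter, Finset.mem_univ, true_and] at hS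
      simp only [Finset.mem_filter, Feas, Finset.mem_univ, true_and]
      constructor
      · have : ∑ i, ((e S i : ℕ)) = ∑ i, if i ∈ S then C else 0 :=
          Finset.sum_congr rfl fun i _ => heval S i
        rw [this, Finset.sum_ite_mem, Finset.univ_inter, Finset.sum_const,
          smul_eq_mul, hS]
      · intro i
        rw [heval]
        by_cases h : i ∈ S <;> simp [h]
    · intro z hz
      simp only [Finset.mem_filter, Feas, Finset.mem_univ, true_and] at hz
      funext i
      apply Fin.val_injective
      simp only [hedef, hSofdef, Finset.mem_filter, Finset.mem_univ, true_and]
      rcases hz.2 i with h | h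
      · rw [if_neg (by omega)]
        simp [h.symm] <;> omega
      · rw [if_pos h]
        exact h.symm
    · intro S hS
      ext i
      rw [hmemSof, heval]
      by_cases h : i ∈ S <;> simp [h] <;> omega
    · intro z hz; rfl
  -- the marginal sum
  have hmargif : ∀ (k : Fin K) (i : Fin N),
      ∑ S ∈ Finset.univ.filter (fun S : Finset (Fin N) => S.card = M),
        (if i ∈ S then Q k S else 0) = α k i := by
    intro k i
    rw [← hQmarg k i, Finset.sum_ite, Finset.sum_const_zero, add_zero]
    apply Finset.sum_congr _ (fun _ _ => rfl)
    ext S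
    simp [Finset.mem_filter, and_comm]
  -- qprob computations
  have hqC : ∀ (k : Fin K) (i : Fin N), qprob N C M (P k) i C = α k i := by
    intro k i
    rw [qprob, Finset.sum_filter]
    have : ∀ z ∈ Feas N C M,
        (if (z i : ℕ) = C then P k z else 0)
        = (if ∀ j, (z j : ℕ) = 0 ∨ (z j : ℕ) = C
            then (if i ∈ Sof z then Q k (Sof z) else 0) else 0) := by
      intro z _
      rw [hP]
      simp only [hSofdef, Finset.mem_filter, Finset.mem_univ, true_and]
      split_ifs <;> rfl
    rw [Finset.sum_congr rfl this, core (fun S => if i ∈ S then Q k S else 0)]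
    exact hmargif k i
  have hq0 : ∀ (k : Fin K) (i : Fin N), qprob N C M (P k) i 0 = 1 - α k i := by
    intro k i
    rw [qprob, Finset.sum_filter]
    have : ∀ z ∈ Feas N C M,
        (if (z i : ℕ) = 0 then P k z else 0)
        = (if ∀ j, (z j : ℕ) = 0 ∨ (z j : ℕ) = C
            then (if i ∉ Sof z then Q k (Sof z) else 0) else 0) := by
      intro z _
      rw [hP]
      by_cases hzc : ∀ j, (z j : ℕ) = 0 ∨ (z j : ℕ) = C
      · simp only [hzc, if_true, hSofdef, Finset.mem_filter, Finset.mem_univ,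
          true_and]
        rcases hzc i with h | h
        · rw [if_pos h, if_pos (show ¬ (z i : ℕ) = C by omega)]
        · rw [if_neg (show ¬ (z i : ℕ) = 0 by omega),
            if_neg (show ¬ ¬ (z i : ℕ) = C by simp [h])]
          simp
      · simp only [if_neg hzc, ite_self]
    rw [Finset.sum_congr rfl this, core (fun S => if i ∉ S then Q k S else 0)]
    have hsplit :
        ∑ S ∈ Finset.univ.filter (fun S : Finset (Fin N) => S.card = M),
          (if i ∉ S then Q k S else 0)
        = (∑ S ∈ Finset.univ.filter (fun S : Finset (Fin N) => S.card = M), Q k S)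
          - ∑ S ∈ Finset.univ.filter (fun S : Finset (Fin N) => S.card = M),
              (if i ∈ S then Q k S else 0) := by
      rw [← Finset.sum_sub_distrib]
      refine Finset.sum_congr rfl fun S _ => ?_
      by_cases h : i ∈ S <;> simp [h]
    rw [hsplit, hQ1, hmargif]
  have hqmid : ∀ (k : Fin K) (i : Fin N) (x : ℕ), 0 < x → x < C →
      qprob N C M (P k) i x = 0 := by
    intro k i x hx0 hxC
    rw [qprob]
    refine Finset.sum_eq_zero fun z hz => ?_
    simp only [Finset.mem_filter] at hz
    rw [hP]
    rw [if_neg]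
    intro hzc
    rcases hzc i with h | h <;> omega
  -- pmf
  have hpmf : ∀ k, IsPmfOnFeas N C M (P k) := by
    intro k
    constructor
    · intro z hz
      rw [hP]
      split_ifs with hzc
      · apply hQ0
        simp only [Finset.mem_filter, Feas, Finset.mem_univ, true_and] at hz
        exact hcard z hz hzc
      · exact le_refl 0
    · have : ∀ z ∈ Feas N C M, P k z
          = if ∀ j, (z j : ℕ) = 0 ∨ (z j : ℕ) = C then Q k (Sof z) else 0 :=
        fun z _ => hP k z
      rw [Finset.sum_congr rfl this, core (Q k), hQ1]
  -- sum of Γ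
  have hΓsum : ∑ y ∈ Finset.range (C + 1), Γ y = γ0 + γ1 := by
    rw [Finset.sum_range_succ, hΓC]
    have : ∑ y ∈ Finset.range C, Γ y = γ0 := by
      rw [Finset.sum_eq_single_of_mem 0 (Finset.mem_range.mpr hCpos)]
      · exact hΓ0
      · intro y hy hne
        exact hΓmid y (Nat.pos_of_ne_zero hne) (Finset.mem_range.mp hy)
    rw [this]
  constructor
  · refine ⟨hpmf, ?_, ?_⟩
    · intro k i y hy
      rw [Finset.mem_range] at hy
      rcases Nat.eq_zero_or_pos y with hy0 | hy0
      · subst hy0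
        simp only [Nat.sub_zero, hqC, hΓ0]
        calc γ0 ≥ pg k * p i * α k i := hγ0 k i
          _ = p i * pg k * α k i := by ring
      · rcases Nat.lt_or_ge y C with hyC | hyC
        · have h1 : 0 < C - y := by omega
          have h2 : C - y < C := by omega
          rw [hqmid k i _ h1 h2, hΓmid y hy0 hyC]
          simp
        · have : y = C := by omega
          subst this
          rw [Nat.sub_self, hq0, hΓC]
          calc γ1 ≥ pg k * p i * (1 - α k i) := hγ1 k i
            _ = p i * pg k * (1 - α k i) := by ring
    · rw [hΓsum]; linarith
  · rw [commCost]
    have hinner : ∀ (k : Fin K) (i : Fin N),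
        ∑ y ∈ Finset.range (C + 1),
          pg k * p i * (y : ℝ) * qprob N C M (P k) i (C - y)
        = C * (pg k * p i * (1 - α k i)) := by
      intro k i
      rw [Finset.sum_eq_single_of_mem C (Finset.mem_range.mpr (Nat.lt_succ_self C))]
      · rw [Nat.sub_self, hq0]; ring
      · intro y hy hne
        rw [Finset.mem_range] at hy
        rcases Nat.eq_zero_or_pos y with hy0 | hy0
        · subst hy0; simp
        · have hyC : y < C := by omega
          rw [hqmid k i _ (by omega) (by omega), mul_zero]
    have hsums : ∑ k : Fin K, ∑ i : Fin N, ∑ y ∈ Finset.range (C + 1),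
          pg k * p i * (y : ℝ) * qprob N C M (P k) i (C - y)
        = (C : ℝ) * ∑ k : Fin K, ∑ i : Fin N, pg k * p i * (1 - α k i) := by
      rw [Finset.mul_sum]
      refine Finset.sum_congr rfl fun k _ => ?_
      rw [Finset.mul_sum]
      exact Finset.sum_congr rfl fun i _ => hinner k i
    rw [hsums, one_div, inv_mul_cancel_left₀ hCne]
end

section
/- For every privacy threshold ζ ∈ ℝ, the set of communication costs attained by P1-feasible points equals the set of objectives attained by P2-feasible points; that is, { Ω((P^{(k)})_k) : ((P^{(k)})_k, (Γ_y)_y) is P1-feasible } = { ∑_k ∑_i pg_k · p_i · (1 − α^{(k)}_i) : ((α^{(k)}_i)_{k,i}, γ_0, γ_1) is P2-feasible } as subsets of ℝ. In particular, the chunk-based joint probabilistic caching optimization P1 and the disjoint probabilistic caching optimization P2 have the same optimal value. -/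
open Finset

noncomputable def fracSet {N : ℕ} (α : Fin N → ℝ) : Finset (Fin N) :=
  Finset.univ.filter fun i => α i ≠ 0 ∧ α i ≠ 1

lemma decomp_aux (n : ℕ) : ∀ (N M : ℕ) (α : Fin N → ℝ),
    (fracSet α).card ≤ n →
    (∀ i, 0 ≤ α i ∧ α i ≤ 1) → (∑ i, α i = (M : ℝ)) →
    ∃ w : Finset (Fin N) → ℝ, (∀ S, 0 ≤ w S) ∧ (∑ S, w S = 1) ∧
      (∀ S, w S ≠ 0 → S.card = M) ∧
      (∀ i, ∑ S ∈ Finset.univ.filter (fun S => i ∈ S), w S = α i) := by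
  induction n with
  | zero =>
    intro N M α hcard h01 hsum
    have hempty : fracSet α = ∅ := Finset.card_eq_zero.mp (Nat.le_zero.mp hcard)
    have hval : ∀ i, α i = 0 ∨ α i = 1 := by
      intro i
      by_contra h
      push_neg at h
      have : i ∈ fracSet α := by simp [fracSet, h.1, h.2]
      simp [hempty] at this
    set S₀ : Finset (Fin N) := Finset.univ.filter (fun i => α i = 1) with hS₀
    have hαind : ∀ i, α i = if i ∈ S₀ then (1:ℝ) else 0 := by
      intro i
      rcases hval i with h | h <;> simp [hS₀, h]
    have hcardS₀ : (S₀.card : ℝ) = (M : ℝ) := by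
      rw [← hsum]
      rw [Finset.sum_congr rfl (fun i _ => hαind i)]
      simp
    have hcM : S₀.card = M := by exact_mod_cast hcardS₀
    refine ⟨fun S => if S = S₀ then 1 else 0, ?_, ?_, ?_, ?_⟩
    · intro S; positivity
    · simp
    · intro S hS
      by_cases h : S = S₀
      · rw [h, hcM]
      · simp [h] at hS
    · intro i
      rw [Finset.sum_filter]
      rw [hαind i]
      rw [Finset.sum_congr rfl (fun S _ => ?_)]
      · rw [Finset.sum_ite_eq' Finset.univ S₀ (fun S => if i ∈ S then (1:ℝ) else 0)]
        simp
      · by_cases h1 : S = S₀ <;> by_cases h2 : i ∈ S <;> simp [h1, h2]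
  | succ n ih =>
    intro N M α hcard h01 hsum
    by_cases hle : (fracSet α).card ≤ n
    · exact ih N M α hle h01 hsum
    have h2 : 1 < (fracSet α).card := by
      rcases Nat.lt_or_ge 1 (fracSet α).card with h | h
      · exact h
      · exfalso
        interval_cases hc : (fracSet α).card
        · omega
        · -- exactly one fractional index: contradiction
          obtain ⟨i, hi⟩ := Finset.card_eq_one.mp hc
          have hifrac : α i ≠ 0 ∧ α i ≠ 1 := by
            have : i ∈ fracSet α := by rw [hi]; exact Finset.mem_singleton_self i
            simpa [fracSet] using this
          have hothers : ∀ j, j ≠ i → α j = 0 ∨ α j = 1 := by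
            intro j hj
            by_contra h'
            push_neg at h'
            have : j ∈ fracSet α := by simp [fracSet, h'.1, h'.2]
            rw [hi, Finset.mem_singleton] at this
            exact hj this
          set c : ℕ := ((Finset.univ.erase i).filter (fun j => α j = 1)).card with hc'
          have hsum' : ∑ j ∈ Finset.univ.erase i, α j = (c : ℝ) := by
            calc ∑ j ∈ Finset.univ.erase i, α j
                = ∑ j ∈ Finset.univ.erase i, (if α j = 1 then (1:ℝ) else 0) :=
                  Finset.sum_congr rfl (fun j hj => by
                    rcases hothers j (Finset.ne_of_mem_erase hj) with h | h <;> simp [h])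
              _ = (c : ℝ) := by rw [Finset.sum_boole]
          have htot : ∑ j ∈ Finset.univ.erase i, α j + α i = (M : ℝ) := by
            rw [Finset.sum_erase_add _ _ (Finset.mem_univ i)]; exact hsum
          have hai : α i = (M : ℝ) - (c : ℝ) := by linarith [hsum']
          have h0 : 0 < α i := lt_of_le_of_ne (h01 i).1 (Ne.symm hifrac.1)
          have h1 : α i < 1 := lt_of_le_of_ne (h01 i).2 hifrac.2
          have hcM : (c : ℝ) < (M : ℝ) := by linarith
          have hMc : (M : ℝ) < (c : ℝ) + 1 := by linarith
          have : c < M := by exact_mod_cast hcM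
          have : M < c + 1 := by exact_mod_cast hMc
          omega
    obtain ⟨i, hi, j, hj, hij⟩ := Finset.one_lt_card.mp h2
    have hif : α i ≠ 0 ∧ α i ≠ 1 := by simpa [fracSet] using hi
    have hjf : α j ≠ 0 ∧ α j ≠ 1 := by simpa [fracSet] using hj
    have hji : j ≠ i := Ne.symm hij
    have hi0 : 0 < α i := lt_of_le_of_ne (h01 i).1 (Ne.symm hif.1)
    have hi1 : α i < 1 := lt_of_le_of_ne (h01 i).2 hif.2
    have hj0 : 0 < α j := lt_of_le_of_ne (h01 j).1 (Ne.symm hjf.1)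
    have hj1 : α j < 1 := lt_of_le_of_ne (h01 j).2 hjf.2
    set t : ℝ := min (1 - α i) (α j) with ht'
    set s : ℝ := min (α i) (1 - α j) with hs'
    have ht : 0 < t := lt_min (by linarith) hj0
    have hs : 0 < s := lt_min hi0 (by linarith)
    have hti : t ≤ 1 - α i := min_le_left _ _
    have htj : t ≤ α j := min_le_right _ _
    have hsi : s ≤ α i := min_le_left _ _
    have hsj : s ≤ 1 - α j := min_le_right _ _
    set α' : Fin N → ℝ := fun m => if m = i then α i + t else if m = j then α j - t else α m with hα'
    set α'' : Fin N → ℝ := fun m => if m = i then α i - s else if m = j then α j + s else α m with hα''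
    have hv'i : α' i = α i + t := by simp [hα']
    have hv'j : α' j = α j - t := by simp [hα', hji]
    have hv'm : ∀ m, m ≠ i → m ≠ j → α' m = α m := fun m h1 h2 => by simp [hα', h1, h2]
    have hv''i : α'' i = α i - s := by simp [hα'']
    have hv''j : α'' j = α j + s := by simp [hα'', hji]
    have hv''m : ∀ m, m ≠ i → m ≠ j → α'' m = α m := fun m h1 h2 => by simp [hα'', h1, h2]
    have h01' : ∀ m, 0 ≤ α' m ∧ α' m ≤ 1 := by
      intro m
      by_cases h1 : m = i
      · subst h1; rw [hv'i]; constructor <;> linarith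
      by_cases h2 : m = j
      · subst h2; rw [hv'j]; constructor <;> linarith
      · rw [hv'm m h1 h2]; exact h01 m
    have h01'' : ∀ m, 0 ≤ α'' m ∧ α'' m ≤ 1 := by
      intro m
      by_cases h1 : m = i
      · subst h1; rw [hv''i]; constructor <;> linarith
      by_cases h2 : m = j
      · subst h2; rw [hv''j]; constructor <;> linarith
      · rw [hv''m m h1 h2]; exact h01 m
    have hsum_gen : ∀ (β : Fin N → ℝ), (β i = α i + (β i - α i)) →
        True := fun _ _ => trivial
    have key_sum : ∀ (β : Fin N → ℝ) (u : ℝ),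
        (β i = α i + u) → (β j = α j - u) → (∀ m, m ≠ i → m ≠ j → β m = α m) →
        ∑ m, β m = (M : ℝ) := by
      intro β u hbi hbj hbm
      have : ∀ m, β m = α m + ((if m = i then u else 0) + (if m = j then -u else 0)) := by
        intro m
        by_cases h1 : m = i
        · subst h1; rw [hbi]; simp [hij]
        by_cases h2 : m = j
        · subst h2; rw [hbj]; simp [h1]; ring
        · rw [hbm m h1 h2]; simp [h1, h2]
      rw [Finset.sum_congr rfl (fun m _ => this m), Finset.sum_add_distrib,
        Finset.sum_add_distrib, Finset.sum_ite_eq' , Finset.sum_ite_eq']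
      simp [hsum]
    have hsum' : ∑ m, α' m = (M : ℝ) := key_sum α' t hv'i hv'j hv'm
    have hsum'' : ∑ m, α'' m = (M : ℝ) := key_sum α'' (-s) (by rw [hv''i]; ring)
      (by rw [hv''j]; ring) hv''m
    have hsub : ∀ (β : Fin N → ℝ), (∀ m, m ≠ i → m ≠ j → β m = α m) →
        fracSet β ⊆ fracSet α := by
      intro β hbm m hm
      by_cases h1 : m = i
      · exact h1 ▸ hi
      by_cases h2 : m = j
      · exact h2 ▸ hj
      · simp only [fracSet, Finset.mem_filter, Finset.mem_univ, true_and] at hm ⊢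
        rwa [hbm m h1 h2] at hm
    have hcard' : (fracSet α').card ≤ n := by
      have hss : fracSet α' ⊂ fracSet α := by
        refine Finset.ssubset_iff_of_subset (hsub α' hv'm) |>.mpr ?_
        rcases min_choice (1 - α i) (α j) with h | h
        · refine ⟨i, hi, ?_⟩
          have hone : α' i = 1 := by rw [hv'i, ht', h]; ring
          simp [fracSet, hone]
        · refine ⟨j, hj, ?_⟩
          have hzero : α' j = 0 := by rw [hv'j, ht', h]; ring
          simp [fracSet, hzero]
      have := Finset.card_lt_card hss
      omega
    have hcard'' : (fracSet α'').card ≤ n := by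
      have hss : fracSet α'' ⊂ fracSet α := by
        refine Finset.ssubset_iff_of_subset (hsub α'' hv''m) |>.mpr ?_
        rcases min_choice (α i) (1 - α j) with h | h
        · refine ⟨i, hi, ?_⟩
          have hzero : α'' i = 0 := by rw [hv''i, hs', h]; ring
          simp [fracSet, hzero]
        · refine ⟨j, hj, ?_⟩
          have hone : α'' j = 1 := by rw [hv''j, hs', h]; ring
          simp [fracSet, hone]
      have := Finset.card_lt_card hss
      omega
    obtain ⟨w', hw'0, hw'1, hw'M, hw'm⟩ := ih N M α' hcard' h01' hsum'
    obtain ⟨w'', hw''0, hw''1, hw''M, hw''m⟩ := ih N M α'' hcard'' h01'' hsum''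
    set lam : ℝ := s / (s + t) with hlam
    have hst : 0 < s + t := by linarith
    have hlam0 : 0 ≤ lam := by positivity
    have hlam1 : lam ≤ 1 := by rw [hlam, div_le_one hst]; linarith
    have hkey : lam * t - (1 - lam) * s = 0 := by
      rw [hlam]; field_simp; ring
    have hmix : ∀ m, lam * α' m + (1 - lam) * α'' m = α m := by
      intro m
      by_cases h1 : m = i
      · subst h1; rw [hv'i, hv''i]; linear_combination hkey
      by_cases h2 : m = j
      · subst h2; rw [hv'j, hv''j]; linear_combination -hkey
      · rw [hv'm m h1 h2, hv''m m h1 h2]; ring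
    refine ⟨fun S => lam * w' S + (1 - lam) * w'' S, ?_, ?_, ?_, ?_⟩
    · intro S
      have := hw'0 S; have := hw''0 S
      have h1l : 0 ≤ 1 - lam := by linarith
      positivity
    · rw [Finset.sum_add_distrib, ← Finset.mul_sum, ← Finset.mul_sum, hw'1, hw''1]; ring
    · intro S hS
      by_cases h' : w' S = 0
      · by_cases h'' : w'' S = 0
        · exact absurd (by simp [h', h'']) hS
        · exact hw''M S h''
      · exact hw'M S h'
    · intro m
      rw [Finset.sum_add_distrib, ← Finset.mul_sum, ← Finset.mul_sum, hw'm, hw''m]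
      exact hmix m


lemma decomp (N M : ℕ) (α : Fin N → ℝ)
    (h01 : ∀ i, 0 ≤ α i ∧ α i ≤ 1) (hsum : ∑ i, α i = (M : ℝ)) :
    ∃ w : Finset (Fin N) → ℝ, (∀ S, 0 ≤ w S) ∧ (∑ S, w S = 1) ∧
      (∀ S, w S ≠ 0 → S.card = M) ∧
      (∀ i, ∑ S ∈ Finset.univ.filter (fun S => i ∈ S), w S = α i) :=
  decomp_aux (fracSet α).card N M α le_rfl h01 hsum

lemma qprob_nonneg (N C M : ℕ) (P : (Fin N → Fin (C + 1)) → ℝ)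
    (hP : ∀ z ∈ Feas N C M, 0 ≤ P z) (i : Fin N) (x : ℕ) : 0 ≤ qprob N C M P i x :=
  Finset.sum_nonneg fun z hz => hP z (Finset.mem_filter.mp hz).1

lemma sum_qprob (N C M : ℕ) (P : (Fin N → Fin (C + 1)) → ℝ) (i : Fin N) :
    ∑ x ∈ Finset.range (C + 1), qprob N C M P i x = ∑ z ∈ Feas N C M, P z :=
  Finset.sum_fiberwise_of_maps_to (fun z _ => Finset.mem_range.mpr (z i).isLt) P

lemma sum_weighted_qprob (N C M : ℕ) (P : (Fin N → Fin (C + 1)) → ℝ) (i : Fin N) (f : ℕ → ℝ) :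
    ∑ x ∈ Finset.range (C + 1), f x * qprob N C M P i x
      = ∑ z ∈ Feas N C M, f ((z i : ℕ)) * P z := by
  rw [← Finset.sum_fiberwise_of_maps_to (g := fun z => ((z i : ℕ)))
    (fun z _ => Finset.mem_range.mpr (z i).isLt) (fun z => f ((z i : ℕ)) * P z)]
  refine Finset.sum_congr rfl fun x _ => ?_
  unfold qprob
  rw [Finset.mul_sum]
  exact Finset.sum_congr rfl fun z hz => by rw [(Finset.mem_filter.mp hz).2]

lemma reflect1 (C : ℕ) (f : ℕ → ℝ) :
    ∑ y ∈ Finset.range (C + 1), (y : ℝ) * f (C - y)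
      = ∑ x ∈ Finset.range (C + 1), ((C : ℝ) - (x : ℝ)) * f x := by
  rw [← Finset.sum_range_reflect (fun y => (y : ℝ) * f (C - y)) (C + 1)]
  refine Finset.sum_congr rfl fun x hx => ?_
  have hx' : x ≤ C := Nat.lt_succ_iff.mp (Finset.mem_range.mp hx)
  have h1 : C + 1 - 1 - x = C - x := by omega
  rw [h1, Nat.sub_sub_self hx', Nat.cast_sub hx']

lemma reflect2 (C : ℕ) (f : ℕ → ℝ) :
    ∑ y ∈ Finset.range (C + 1), ((C : ℝ) - (y : ℝ)) * f (C - y)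
      = ∑ x ∈ Finset.range (C + 1), (x : ℝ) * f x := by
  rw [← Finset.sum_range_reflect (fun y => ((C : ℝ) - (y : ℝ)) * f (C - y)) (C + 1)]
  refine Finset.sum_congr rfl fun x hx => ?_
  have hx' : x ≤ C := Nat.lt_succ_iff.mp (Finset.mem_range.mp hx)
  have h1 : C + 1 - 1 - x = C - x := by omega
  rw [h1, Nat.sub_sub_self hx', Nat.cast_sub hx']
  ring

lemma inner_cost (N C M : ℕ) (hC : 1 ≤ C) (P : (Fin N → Fin (C + 1)) → ℝ)
    (hP : IsPmfOnFeas N C M P) (i : Fin N) :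
    ∑ y ∈ Finset.range (C + 1), (y : ℝ) * qprob N C M P i (C - y)
      = (C : ℝ) - ∑ x ∈ Finset.range (C + 1), (x : ℝ) * qprob N C M P i x := by
  rw [reflect1]
  have : ∑ x ∈ Finset.range (C + 1), ((C : ℝ) - (x : ℝ)) * qprob N C M P i x
      = (C : ℝ) * ∑ x ∈ Finset.range (C + 1), qprob N C M P i x
        - ∑ x ∈ Finset.range (C + 1), (x : ℝ) * qprob N C M P i x := by
    rw [Finset.mul_sum, ← Finset.sum_sub_distrib]
    exact Finset.sum_congr rfl fun x _ => by ring
  rw [this, sum_qprob, hP.2, mul_one]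

lemma commCost_eq (N K C M : ℕ) (hC : 1 ≤ C) (p : Fin N → ℝ) (pg : Fin K → ℝ)
    (P : Fin K → (Fin N → Fin (C + 1)) → ℝ) (hP : ∀ k, IsPmfOnFeas N C M (P k)) :
    commCost N K C M p pg P = ∑ k : Fin K, ∑ i : Fin N,
      pg k * p i * (1 - (1 / (C : ℝ)) * ∑ x ∈ Finset.range (C + 1),
        (x : ℝ) * qprob N C M (P k) i x) := by
  have hC0 : (0 : ℝ) < (C : ℝ) := by exact_mod_cast Nat.lt_of_lt_of_le Nat.zero_lt_one hC
  unfold commCost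
  rw [Finset.mul_sum]
  refine Finset.sum_congr rfl fun k _ => ?_
  rw [Finset.mul_sum]
  refine Finset.sum_congr rfl fun i _ => ?_
  have h1 : ∑ y ∈ Finset.range (C + 1), pg k * p i * (y : ℝ) * qprob N C M (P k) i (C - y)
      = pg k * p i * ∑ y ∈ Finset.range (C + 1), (y : ℝ) * qprob N C M (P k) i (C - y) := by
    rw [Finset.mul_sum]
    exact Finset.sum_congr rfl fun y _ => by ring
  rw [h1, inner_cost N C M hC (P k) (hP k) i]
  field_simp

/-- Lemma 1: for every privacy threshold `ζ`, the set of communication costs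
attained by P1-feasible points (chunk-based JPC) equals the set of objectives
attained by P2-feasible points (DPC); in particular the two optimizations
have the same optimal value. -/
theorem stmt4 (N K C M : ℕ) (hN : 1 ≤ N) (hK : 1 ≤ K) (hC : 1 ≤ C)
    (hM : 1 ≤ M) (hMN : M ≤ N)
    (p : Fin N → ℝ) (hp0 : ∀ i, 0 ≤ p i) (hp1 : ∑ i, p i = 1)
    (pg : Fin K → ℝ) (hpg0 : ∀ k, 0 ≤ pg k) (hpg1 : ∑ k, pg k = 1)
    (ζ : ℝ) :
    {c : ℝ | ∃ (P : Fin K → (Fin N → Fin (C + 1)) → ℝ) (Γ : ℕ → ℝ),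
        P1Feasible N K C M p pg ζ P Γ ∧ c = commCost N K C M p pg P}
    = {c : ℝ | ∃ (α : Fin K → Fin N → ℝ) (γ0 γ1 : ℝ),
        P2Feasible N K M p pg ζ α γ0 γ1 ∧
        c = ∑ k : Fin K, ∑ i : Fin N, pg k * p i * (1 - α k i)} := by
  have hC0 : (0 : ℝ) < (C : ℝ) := by exact_mod_cast Nat.lt_of_lt_of_le Nat.zero_lt_one hC
  have hC0' : (C : ℝ) ≠ 0 := ne_of_gt hC0
  ext c
  simp only [Set.mem_setOf_eq]
  constructor
  · rintro ⟨P, Γ, ⟨hpmf, hΓ, hζ⟩, hc⟩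
    set α : Fin K → Fin N → ℝ := fun k i =>
      (1 / (C : ℝ)) * ∑ x ∈ Finset.range (C + 1), (x : ℝ) * qprob N C M (P k) i x with hα
    have hq0 : ∀ k i x, 0 ≤ qprob N C M (P k) i x :=
      fun k i x => qprob_nonneg N C M (P k) (hpmf k).1 i x
    have hSle : ∀ k i, ∑ x ∈ Finset.range (C + 1), (x : ℝ) * qprob N C M (P k) i x ≤ (C : ℝ) := by
      intro k i
      calc ∑ x ∈ Finset.range (C + 1), (x : ℝ) * qprob N C M (P k) i x
          ≤ ∑ x ∈ Finset.range (C + 1), (C : ℝ) * qprob N C M (P k) i x := by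
            refine Finset.sum_le_sum fun x hx => ?_
            have : (x : ℝ) ≤ (C : ℝ) := by
              exact_mod_cast Nat.lt_succ_iff.mp (Finset.mem_range.mp hx)
            exact mul_le_mul_of_nonneg_right this (hq0 k i x)
        _ = (C : ℝ) := by rw [← Finset.mul_sum, sum_qprob, (hpmf k).2, mul_one]
    have hS0 : ∀ k i, 0 ≤ ∑ x ∈ Finset.range (C + 1), (x : ℝ) * qprob N C M (P k) i x :=
      fun k i => Finset.sum_nonneg fun x _ => mul_nonneg (Nat.cast_nonneg x) (hq0 k i x)
    refine ⟨α, ∑ y ∈ Finset.range (C + 1), (((C : ℝ) - (y : ℝ)) / (C : ℝ)) * Γ y,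
            ∑ y ∈ Finset.range (C + 1), ((y : ℝ) / (C : ℝ)) * Γ y, ⟨?_, ?_, ?_, ?_, ?_⟩, ?_⟩
    · intro k i
      constructor
      · simp only [hα]
        exact mul_nonneg (by positivity) (hS0 k i)
      · simp only [hα]
        have h2 := mul_le_mul_of_nonneg_left (hSle k i)
          (le_of_lt (by positivity : (0 : ℝ) < 1 / (C : ℝ)))
        have h3 : (1 / (C : ℝ)) * (C : ℝ) = 1 := by field_simp
        linarith
    · intro k
      have hz : ∀ z ∈ Feas N C M, ∑ i, ((z i : ℕ) : ℝ) = (M : ℝ) * (C : ℝ) := by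
        intro z hzm
        have h := (Finset.mem_filter.mp hzm).2
        rw [← Nat.cast_sum, h, Nat.cast_mul]
      calc ∑ i, α k i
          = (1 / (C : ℝ)) * ∑ i, ∑ x ∈ Finset.range (C + 1),
              (x : ℝ) * qprob N C M (P k) i x := by
            simp only [hα]; rw [Finset.mul_sum]
        _ = (1 / (C : ℝ)) * ∑ i, ∑ z ∈ Feas N C M, ((z i : ℕ) : ℝ) * P k z := by
            congr 1
            exact Finset.sum_congr rfl fun i _ =>
              sum_weighted_qprob N C M (P k) i (fun x => (x : ℝ))
        _ = (1 / (C : ℝ)) * ∑ z ∈ Feas N C M, (∑ i, ((z i : ℕ) : ℝ)) * P k z := by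
            rw [Finset.sum_comm]
            congr 1
            exact Finset.sum_congr rfl fun z _ => (Finset.sum_mul _ _ _).symm
        _ = (1 / (C : ℝ)) * ∑ z ∈ Feas N C M, ((M : ℝ) * (C : ℝ)) * P k z := by
            congr 1
            exact Finset.sum_congr rfl fun z hzm => by rw [hz z hzm]
        _ = (1 / (C : ℝ)) * ((M : ℝ) * (C : ℝ) * ∑ z ∈ Feas N C M, P k z) := by
            congr 1
            rw [Finset.mul_sum]
        _ = (M : ℝ) := by rw [(hpmf k).2]; field_simp
    · intro k i
      have hterm : ∀ y ∈ Finset.range (C + 1),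
          (((C : ℝ) - (y : ℝ)) / (C : ℝ)) * (p i * pg k * qprob N C M (P k) i (C - y))
            ≤ (((C : ℝ) - (y : ℝ)) / (C : ℝ)) * Γ y := by
        intro y hy
        have hyC : (y : ℝ) ≤ (C : ℝ) := by
          exact_mod_cast Nat.lt_succ_iff.mp (Finset.mem_range.mp hy)
        exact mul_le_mul_of_nonneg_left (hΓ k i y hy)
          (div_nonneg (by linarith) (le_of_lt hC0))
      have e1 : ∑ y ∈ Finset.range (C + 1),
          (((C : ℝ) - (y : ℝ)) / (C : ℝ)) * (p i * pg k * qprob N C M (P k) i (C - y))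
          = (p i * pg k / (C : ℝ)) * ∑ y ∈ Finset.range (C + 1),
              ((C : ℝ) - (y : ℝ)) * qprob N C M (P k) i (C - y) := by
        rw [Finset.mul_sum]
        exact Finset.sum_congr rfl fun y _ => by ring
      have e2 : pg k * p i * α k i = ∑ y ∈ Finset.range (C + 1),
          (((C : ℝ) - (y : ℝ)) / (C : ℝ)) * (p i * pg k * qprob N C M (P k) i (C - y)) := by
        rw [e1, reflect2]
        simp only [hα]
        ring
      rw [ge_iff_le, e2]
      exact Finset.sum_le_sum hterm
    · intro k i
      have hterm : ∀ y ∈ Finset.range (C + 1),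
          ((y : ℝ) / (C : ℝ)) * (p i * pg k * qprob N C M (P k) i (C - y))
            ≤ ((y : ℝ) / (C : ℝ)) * Γ y := by
        intro y _hy
        exact mul_le_mul_of_nonneg_left (hΓ k i y _hy)
          (div_nonneg (Nat.cast_nonneg y) (le_of_lt hC0))
      have e1 : ∑ y ∈ Finset.range (C + 1),
          ((y : ℝ) / (C : ℝ)) * (p i * pg k * qprob N C M (P k) i (C - y))
          = (p i * pg k / (C : ℝ)) * ∑ y ∈ Finset.range (C + 1),
              (y : ℝ) * qprob N C M (P k) i (C - y) := by
        rw [Finset.mul_sum]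
        exact Finset.sum_congr rfl fun y _ => by ring
      have e2 : pg k * p i * (1 - α k i) = ∑ y ∈ Finset.range (C + 1),
          ((y : ℝ) / (C : ℝ)) * (p i * pg k * qprob N C M (P k) i (C - y)) := by
        rw [e1, inner_cost N C M hC (P k) (hpmf k) i]
        simp only [hα]
        rw [mul_comm (p i) (pg k)]
        field_simp
      rw [ge_iff_le, e2]
      exact Finset.sum_le_sum hterm
    · have hsumΓ : (∑ y ∈ Finset.range (C + 1), (((C : ℝ) - (y : ℝ)) / (C : ℝ)) * Γ y)
          + ∑ y ∈ Finset.range (C + 1), ((y : ℝ) / (C : ℝ)) * Γ y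
          = ∑ y ∈ Finset.range (C + 1), Γ y := by
        rw [← Finset.sum_add_distrib]
        refine Finset.sum_congr rfl fun y hy => ?_
        field_simp
        ring
      linarith
    · rw [hc, commCost_eq N K C M hC p pg P hpmf]
  · rintro ⟨α, γ0, γ1, ⟨h01, hsumM, hγ0, hγ1, hζ⟩, hc⟩
    choose w hw0 hw1 hwM hwm using fun k => decomp N M (α k) (h01 k) (hsumM k)
    set zOf : Finset (Fin N) → (Fin N → Fin (C + 1)) := fun S i =>
      if i ∈ S then (⟨C, Nat.lt_succ_self C⟩ : Fin (C + 1)) else ⟨0, Nat.succ_pos C⟩ with hzOf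
    set P : Fin K → (Fin N → Fin (C + 1)) → ℝ := fun k z =>
      ∑ S ∈ Finset.univ.filter (fun S => zOf S = z), w k S with hPd
    have hzval : ∀ S i, ((zOf S i : ℕ)) = if i ∈ S then C else 0 := by
      intro S i; by_cases h : i ∈ S <;> simp [hzOf, h]
    have hzFeas : ∀ S : Finset (Fin N), S.card = M → zOf S ∈ Feas N C M := by
      intro S hcard
      simp only [Feas, Finset.mem_filter, Finset.mem_univ, true_and]
      calc ∑ i, ((zOf S i : ℕ)) = ∑ i, (if i ∈ S then C else 0) :=
            Finset.sum_congr rfl fun i _ => hzval S i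
        _ = ∑ _i ∈ S, C := by rw [Finset.sum_ite_mem, Finset.univ_inter]
        _ = M * C := by rw [Finset.sum_const, hcard, smul_eq_mul]
    have hfiber : ∀ (k : Fin K) (t : Finset (Fin N → Fin (C + 1))),
        ∑ z ∈ t, P k z = ∑ S ∈ Finset.univ.filter (fun S => zOf S ∈ t), w k S := by
      intro k t
      simp only [hPd]
      exact Finset.sum_fiberwise_eq_sum_filter _ t zOf (w k)
    have hsupp_congr : ∀ (k : Fin K) (Q Q' : Finset (Fin N) → Prop)
        [DecidablePred Q] [DecidablePred Q'],
        (∀ S, S.card = M → (Q S ↔ Q' S)) →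
        ∑ S ∈ Finset.univ.filter Q, w k S = ∑ S ∈ Finset.univ.filter Q', w k S := by
      intro k Q Q' _ _ h
      rw [Finset.sum_filter, Finset.sum_filter]
      refine Finset.sum_congr rfl fun S _ => ?_
      by_cases hw : w k S = 0
      · simp [hw]
      · rw [if_congr (h S (hwM k S hw)) rfl rfl]
    have hpmf : ∀ k, IsPmfOnFeas N C M (P k) := by
      intro k
      constructor
      · intro z _
        simp only [hPd]
        exact Finset.sum_nonneg fun S _ => hw0 k S
      · rw [hfiber k (Feas N C M),
          hsupp_congr k _ (fun _ => True) (fun S hS => by simp [hzFeas S hS])]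
        simpa using hw1 k
    have hqC : ∀ k i, qprob N C M (P k) i C = α k i := by
      intro k i
      unfold qprob
      rw [hfiber k, hsupp_congr k _ (fun S => i ∈ S) ?_]
      · exact hwm k i
      · intro S hS
        simp only [Finset.mem_filter, hzFeas S hS, true_and, hzval S i]
        constructor
        · intro hval
          by_contra hni
          rw [if_neg hni] at hval
          omega
        · intro hmem
          rw [if_pos hmem]
    have hq0v : ∀ k i, qprob N C M (P k) i 0 = 1 - α k i := by
      intro k i
      unfold qprob
      rw [hfiber k, hsupp_congr k _ (fun S => i ∉ S) ?_]
      · have hsplit := Finset.sum_filter_add_sum_filter_not Finset.univ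
          (fun S : Finset (Fin N) => i ∈ S) (w k)
        rw [hwm k i, hw1 k] at hsplit
        linarith
      · intro S hS
        simp only [Finset.mem_filter, hzFeas S hS, true_and, hzval S i]
        constructor
        · intro hval hmem
          rw [if_pos hmem] at hval
          omega
        · intro hni
          rw [if_neg hni]
    have hqmid : ∀ k i x, x ≠ 0 → x ≠ C → qprob N C M (P k) i x = 0 := by
      intro k i x hx0 hxC
      unfold qprob
      rw [hfiber k, hsupp_congr k _ (fun _ => False) ?_]
      · simp
      · intro S hS
        simp only [Finset.mem_filter, hzFeas S hS, true_and, hzval S i, iff_false]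
        intro hval
        by_cases hmem : i ∈ S
        · rw [if_pos hmem] at hval; omega
        · rw [if_neg hmem] at hval; omega
    set Γ : ℕ → ℝ := fun y => if y = 0 then γ0 else if y = C then γ1 else 0 with hΓd
    have hΓ0 : Γ 0 = γ0 := by simp [hΓd]
    have hΓC : Γ C = γ1 := by
      simp only [hΓd]
      rw [if_neg (by omega)]
      simp
    have hΓmid : ∀ y, y ≠ 0 → y ≠ C → Γ y = 0 := by
      intro y h0 hC'
      simp only [hΓd]
      rw [if_neg h0, if_neg hC']
    refine ⟨P, Γ, ⟨hpmf, ?_, ?_⟩, ?_⟩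
    · intro k i y hy
      by_cases hy0 : y = 0
      · subst hy0
        rw [hΓ0, Nat.sub_zero, hqC k i, ge_iff_le]
        calc p i * pg k * α k i = pg k * p i * α k i := by ring
          _ ≤ γ0 := hγ0 k i
      by_cases hyC : y = C
      · subst hyC
        rw [hΓC, Nat.sub_self, hq0v k i, ge_iff_le]
        calc p i * pg k * (1 - α k i) = pg k * p i * (1 - α k i) := by ring
          _ ≤ γ1 := hγ1 k i
      · have hyle : y ≤ C := Nat.lt_succ_iff.mp (Finset.mem_range.mp hy)
        rw [hΓmid y hy0 hyC, hqmid k i (C - y) (by omega) (by omega), mul_zero]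
    · have hsplit : ∀ y, Γ y = (if y = 0 then γ0 else 0) + (if y = C then γ1 else 0) := by
        intro y
        by_cases h0 : y = 0
        · subst h0
          rw [hΓ0, if_pos rfl, if_neg (by omega)]
          ring
        by_cases hC' : y = C
        · subst hC'
          rw [hΓC, if_neg h0, if_pos rfl]
          ring
        · rw [hΓmid y h0 hC', if_neg h0, if_neg hC']
          ring
      have hΓsum : ∑ y ∈ Finset.range (C + 1), Γ y = γ0 + γ1 := by
        rw [Finset.sum_congr rfl fun y _ => hsplit y, Finset.sum_add_distrib,
          Finset.sum_ite_eq' (Finset.range (C + 1)) 0 (fun _ => γ0),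
          Finset.sum_ite_eq' (Finset.range (C + 1)) C (fun _ => γ1)]
        rw [if_pos (Finset.mem_range.mpr (by omega)), if_pos (Finset.mem_range.mpr (by omega))]
      rw [hΓsum]
      linarith
    · rw [hc, commCost_eq N K C M hC p pg P hpmf]
      refine Finset.sum_congr rfl fun k _ => Finset.sum_congr rfl fun i _ => ?_
      have hA : ∑ x ∈ Finset.range (C + 1), (x : ℝ) * qprob N C M (P k) i x
          = (C : ℝ) * α k i := by
        rw [Finset.range_add_one, Finset.sum_insert Finset.notMem_range_self, hqC k i]
        have hrest : ∑ x ∈ Finset.range C, (x : ℝ) * qprob N C M (P k) i x = 0 := by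
          refine Finset.sum_eq_zero fun x hx => ?_
          by_cases hx0 : x = 0
          · simp [hx0]
          · rw [hqmid k i x hx0 (Nat.ne_of_lt (Finset.mem_range.mp hx)), mul_zero]
        rw [hrest]
        ring
      rw [hA]
      have hcancel : (1 / (C : ℝ)) * ((C : ℝ) * α k i) = α k i := by
        field_simp
      rw [hcancel]
end

section
/- Let N ≥ 2 and 1 ≤ M < N, let file popularities p : Fin N → ℝ satisfy p_i ≥ 0, ∑_i p_i = 1 and p_1 ≥ p_2 ≥ … ≥ p_N, let request generation probabilities pg : Fin K → ℝ satisfy pg_k ≥ 0 and ∑_k pg_k = 1, and let s ∈ [0,1]. In the random dummy approach (RDA) each cache deterministically stores files 1,…,M; a request for a cached file i ≤ M is answered with C chunks with probability s and with 0 chunks with probability 1−s, while a request for an uncached file i > M is answered with C chunks with probability 1. Formally the observation Y takes values in {0, C} with q(k,i)(C) = s and q(k,i)(0) = 1−s for i ≤ M, and q(k,i)(C) = 1, q(k,i)(0) = 0 for i > M. Then the privacy degree satisfies Ψ = 1 − ∑_{y ∈ {0,C}} max_{k,i} pg_k · p_i · q(k,i)(y) = 1 − (max_k pg_k) · ( (1−s)·p_1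 + max{ p_{M+1}, s·p_1 } ). -/
/-- Privacy degree of the random dummy approach (RDA): the caches store the
`M` most popular files (indices `0,…,M−1`, popularities nonincreasing); a
request for a cached file is answered with `C` chunks (observation `y = 1`)
with probability `s` and `0` chunks (observation `y = 0`) with probability
`1 − s`, while a request for an uncached file is always answered with `C`
chunks. Then
`Ψ = 1 − (max_k pg_k) · ((1−s)·p_0 + max (p_M) (s·p_0))`. -/
theorem stmt9 (N K M C : ℕ) (hN : 2 ≤ N) (hK : 1 ≤ K) (hC : 1 ≤ C)
    (hM1 : 1 ≤ M) (hMN : M < N)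
    (p : Fin N → ℝ) (hp0 : ∀ i, 0 ≤ p i) (hp1 : ∑ i, p i = 1)
    (hpmono : ∀ i j : Fin N, i ≤ j → p j ≤ p i)
    (pg : Fin K → ℝ) (hpg0 : ∀ k, 0 ≤ pg k) (hpg1 : ∑ k, pg k = 1)
    (s : ℝ) (hs0 : 0 ≤ s) (hs1 : s ≤ 1)
    (q : Fin K × Fin N → Fin 2 → ℝ)
    (hqcached : ∀ (k : Fin K) (i : Fin N), (i : ℕ) < M →
      q (k, i) 0 = 1 - s ∧ q (k, i) 1 = s)
    (hquncached : ∀ (k : Fin K) (i : Fin N), M ≤ (i : ℕ) →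
      q (k, i) 0 = 0 ∧ q (k, i) 1 = 1)
    (hne : (Finset.univ : Finset (Fin K × Fin N)).Nonempty)
    (hneK : (Finset.univ : Finset (Fin K)).Nonempty) :
    1 - ∑ y : Fin 2, Finset.univ.sup' hne
        (fun ki : Fin K × Fin N => pg ki.1 * p ki.2 * q ki y)
      = 1 - (Finset.univ.sup' hneK pg)
          * ((1 - s) * p ⟨0, by omega⟩
            + max (p ⟨M, hMN⟩) (s * p ⟨0, by omega⟩)) := by

  set A : ℝ := Finset.univ.sup' hneK pg with hA
  obtain ⟨k0, -, hk0⟩ := Finset.exists_mem_eq_sup' hneK pg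
  have hAk : ∀ k, pg k ≤ A := fun k => Finset.le_sup' pg (Finset.mem_univ k)
  have hA0 : 0 ≤ A := le_trans (hpg0 k0) (hAk k0)
  have hi0 : (0 : ℕ) < N := by omega
  set i0 : Fin N := ⟨0, hi0⟩
  set iM : Fin N := ⟨M, hMN⟩
  have hp00 : 0 ≤ p i0 := hp0 i0
  have hpM0 : 0 ≤ p iM := hp0 iM
  have hpi0 : ∀ i : Fin N, p i ≤ p i0 := fun i => hpmono i0 i (Fin.mk_le_of_le_val (Nat.zero_le _))
  have hpiM : ∀ i : Fin N, M ≤ (i : ℕ) → p i ≤ p iM := fun i hi => hpmono iM i hi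
  have h1s : 0 ≤ 1 - s := by linarith
  have h0 : Finset.univ.sup' hne (fun ki : Fin K × Fin N => pg ki.1 * p ki.2 * q ki 0)
      = A * ((1 - s) * p i0) := by
    apply le_antisymm
    · apply Finset.sup'_le
      rintro ⟨k, i⟩ -
      by_cases hi : (i : ℕ) < M
      · rw [(hqcached k i hi).1]
        calc pg k * p i * (1 - s) ≤ A * p i0 * (1 - s) := by
              apply mul_le_mul_of_nonneg_right _ h1s
              exact mul_le_mul (hAk k) (hpi0 i) (hp0 i) hA0
          _ = A * ((1 - s) * p i0) := by ring
      · rw [(hquncached k i (le_of_not_gt hi)).1]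
        simp only [mul_zero]
        positivity
    · have := Finset.le_sup' (fun ki : Fin K × Fin N => pg ki.1 * p ki.2 * q ki 0)
        (Finset.mem_univ (k0, i0))
      simp only [(hqcached k0 i0 (by simp [i0]; omega)).1] at this
      calc A * ((1 - s) * p i0) = pg k0 * p i0 * (1 - s) := by rw [← hk0]; ring
        _ ≤ _ := this
  have h1 : Finset.univ.sup' hne (fun ki : Fin K × Fin N => pg ki.1 * p ki.2 * q ki 1)
      = A * max (p iM) (s * p i0) := by
    apply le_antisymm
    · apply Finset.sup'_le
      rintro ⟨k, i⟩ -
      by_cases hi : (i : ℕ) < M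
      · rw [(hqcached k i hi).2]
        calc pg k * p i * s ≤ A * p i0 * s := by
              apply mul_le_mul_of_nonneg_right _ hs0
              exact mul_le_mul (hAk k) (hpi0 i) (hp0 i) hA0
          _ = A * (s * p i0) := by ring
          _ ≤ A * max (p iM) (s * p i0) := by
              exact mul_le_mul_of_nonneg_left (le_max_right _ _) hA0
      · rw [(hquncached k i (le_of_not_gt hi)).2, mul_one]
        calc pg k * p i ≤ A * p iM :=
              mul_le_mul (hAk k) (hpiM i (le_of_not_gt hi)) (hp0 i) hA0
          _ ≤ A * max (p iM) (s * p i0) := by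
              exact mul_le_mul_of_nonneg_left (le_max_left _ _) hA0
    · rcases le_total (s * p i0) (p iM) with h | h
      · rw [max_eq_left h]
        have := Finset.le_sup' (fun ki : Fin K × Fin N => pg ki.1 * p ki.2 * q ki 1)
          (Finset.mem_univ (k0, iM))
        simp only [(hquncached k0 iM (le_refl M)).2, mul_one] at this
        calc A * p iM = pg k0 * p iM := by rw [← hk0]
          _ ≤ _ := this
      · rw [max_eq_right h]
        have := Finset.le_sup' (fun ki : Fin K × Fin N => pg ki.1 * p ki.2 * q ki 1)
          (Finset.mem_univ (k0, i0))
        simp only [(hqcached k0 i0 (by simp [i0]; omega)).2] at this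
        calc A * (s * p i0) = pg k0 * p i0 * s := by rw [← hk0]; ring
          _ ≤ _ := this
  rw [Fin.sum_univ_two, h0, h1]
  ring
end

section
/- Suppose every placement in the support of every policy is non-chunk-based, i.e., P^{(k)} z = 0 whenever some z i ∉ {0, C}. Define the hit ratio of cache k as h^{(k)} = ∑_i p_i · ∑_{z ∈ F, z i ≠ 0} P^{(k)} z. Then the average hit ratio and the communication cost satisfy ∑_k pg_k · h^{(k)} = 1 − Ω. In particular, the average-hit-ratio constraint ∑_k pg_k · h^{(k)} ≥ β is equivalent to the communication-cost constraint Ω ≤ 1 − β. -/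
/-- For non-chunk-based policies (every placement in the support caches each
file either entirely or not at all), the average hit ratio
`∑_k pg_k · h^{(k)}` with `h^{(k)} = ∑_i p_i · ∑_{z ∈ F, z i ≠ 0} P^{(k)} z`
equals `1 − Ω`; in particular the average-hit-ratio constraint
`∑_k pg_k · h^{(k)} ≥ β` is equivalent to `Ω ≤ 1 − β`. -/
theorem stmt12 (N K C M : ℕ) (hN : 1 ≤ N) (hK : 1 ≤ K) (hC : 1 ≤ C)
    (hM : 1 ≤ M) (hMN : M ≤ N)
    (p : Fin N → ℝ) (hp0 : ∀ i, 0 ≤ p i) (hp1 : ∑ i, p i = 1)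
    (pg : Fin K → ℝ) (hpg0 : ∀ k, 0 ≤ pg k) (hpg1 : ∑ k, pg k = 1)
    (P : Fin K → (Fin N → Fin (C + 1)) → ℝ)
    (hpmf : ∀ k, IsPmfOnFeas N C M (P k))
    (hsupp : ∀ (k : Fin K) (z : Fin N → Fin (C + 1)),
      (¬ ∀ i, (z i : ℕ) = 0 ∨ (z i : ℕ) = C) → P k z = 0)
    (h : Fin K → ℝ)
    (hh : ∀ k, h k = ∑ i : Fin N, p i *
      ∑ z ∈ (Feas N C M).filter (fun z => (z i : ℕ) ≠ 0), P k z) :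
    (∑ k, pg k * h k = 1 - commCost N K C M p pg P) ∧
    (∀ β : ℝ, (∑ k, pg k * h k ≥ β ↔ commCost N K C M p pg P ≤ 1 - β)) := by

  have hCne : (C : ℝ) ≠ 0 := by positivity
  have hq0 : ∀ (k : Fin K) (i : Fin N) (x : ℕ), x ≠ 0 → x ≠ C →
      qprob N C M (P k) i x = 0 := by
    intro k i x hx0 hxC
    unfold qprob
    apply Finset.sum_eq_zero
    intro z hz
    simp only [Finset.mem_filter] at hz
    have hz2 := hz.2
    apply hsupp k z
    intro hall
    rcases hall i with h0 | hcc <;> omega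
  have key : commCost N K C M p pg P = ∑ k, pg k * (1 - h k) := by
    unfold commCost
    have inner : ∀ (k : Fin K) (i : Fin N),
        ∑ y ∈ Finset.range (C + 1),
          pg k * p i * (y : ℝ) * qprob N C M (P k) i (C - y)
        = pg k * p i * (C : ℝ) * qprob N C M (P k) i 0 := by
      intro k i
      rw [Finset.sum_eq_single C]
      · simp
      · intro y hy hyC
        have hy' : y < C := by
          simp only [Finset.mem_range] at hy; omega
        by_cases hy0 : y = 0
        · simp [hy0]
        · rw [hq0 k i (C - y) (by omega) (by omega)]
          ring
      · intro hCmem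
        exact absurd (Finset.self_mem_range_succ C) hCmem
    have hqh : ∀ (k : Fin K) (i : Fin N),
        qprob N C M (P k) i 0
        = 1 - ∑ z ∈ (Feas N C M).filter (fun z => (z i : ℕ) ≠ 0), P k z := by
      intro k i
      have := Finset.sum_filter_add_sum_filter_not (Feas N C M)
        (fun z => (z i : ℕ) = 0) (P k)
      rw [(hpmf k).2] at this
      unfold qprob
      linarith [this]
    calc (1 / (C : ℝ)) * ∑ k : Fin K, ∑ i : Fin N, ∑ y ∈ Finset.range (C + 1),
          pg k * p i * (y : ℝ) * qprob N C M (P k) i (C - y)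
        = (1 / (C : ℝ)) * ∑ k : Fin K, ∑ i : Fin N,
            pg k * p i * (C : ℝ) * qprob N C M (P k) i 0 := by
          congr 1
          exact Finset.sum_congr rfl fun k _ =>
            Finset.sum_congr rfl fun i _ => inner k i
      _ = ∑ k, pg k * (1 - h k) := by
          rw [Finset.mul_sum]
          apply Finset.sum_congr rfl
          intro k _
          rw [hh k, Finset.mul_sum]
          have step : ∀ i : Fin N,
              1 / (C : ℝ) * (pg k * p i * (C : ℝ) * qprob N C M (P k) i 0)
              = pg k * p i - pg k * (p i *
                  ∑ z ∈ (Feas N C M).filter (fun z => (z i : ℕ) ≠ 0), P k z) := by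
            intro i
            rw [hqh k i]
            field_simp
          rw [Finset.sum_congr rfl fun i _ => step i, Finset.sum_sub_distrib,
            ← Finset.mul_sum, ← Finset.mul_sum, hp1]
          ring
  have main : ∑ k, pg k * h k = 1 - commCost N K C M p pg P := by
    rw [key]
    have : ∑ k, pg k * (1 - h k) = (∑ k, pg k) - ∑ k, pg k * h k := by
      rw [← Finset.sum_sub_distrib]
      apply Finset.sum_congr rfl
      intro k _; ring
    rw [this, hpg1]
    ring
  exact ⟨main, fun β => by constructor <;> intro hb <;> linarith [main]⟩
end

section
/- Fix integers K ≥ 1, L ≥ 1, C ≥ 1, reals pg : Fin K → ℝ with pg_k ≥ 0, reals p*_l ≥ 0 for l ∈ Fin L, a threshold ζ ∈ ℝ, reals Γ_0, …, Γ_C, and for each k ∈ Fin K, l ∈ Fin L a pmf r^{(k)}_l on {0,…,C} (r^{(k)}_l(y) ≥ 0, ∑_{y=0}^{C} r^{(k)}_l(y) = 1). Assume Γ_y ≥ p*_l · pg_k · r^{(k)}_l(y) for all k, l, y, and 1 − ∑_{y=0}^{C} Γ_y ≥ ζ. Define e^{(k)}_l = (1/C) ∑_{y=0}^{C} y · r^{(k)}_l(y),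 γ̌_0 = (1/C) ∑_{y=0}^{C} (C − y) · Γ_y, and γ̌_1 = (1/C) ∑_{y=0}^{C} y · Γ_y. Then 1 − γ̌_0 − γ̌_1 ≥ ζ, and for all k, l: γ̌_1 ≥ p*_l · pg_k · e^{(k)}_l and γ̌_0 ≥ p*_l · pg_k · (1 − e^{(k)}_l). -/
/-- Feasibility transfer from the `C`-chunk SPC optimization to the
single-chunk one: if `Γ_y ≥ p*_l · pg_k · r^{(k)}_l(y)` for all `k, l, y` and
`1 − ∑_{y=0}^{C} Γ_y ≥ ζ`, then with
`e^{(k)}_l = (1/C) ∑_y y·r^{(k)}_l(y)`,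
`γ̌_0 = (1/C) ∑_y (C−y)·Γ_y` and `γ̌_1 = (1/C) ∑_y y·Γ_y`, one has
`1 − γ̌_0 − γ̌_1 ≥ ζ`, `γ̌_1 ≥ p*_l·pg_k·e^{(k)}_l` and
`γ̌_0 ≥ p*_l·pg_k·(1 − e^{(k)}_l)`. -/
theorem stmt13 (K L C : ℕ) (hK : 1 ≤ K) (hL : 1 ≤ L) (hC : 1 ≤ C)
    (pg : Fin K → ℝ) (hpg0 : ∀ k, 0 ≤ pg k)
    (pstar : Fin L → ℝ) (hpstar0 : ∀ l, 0 ≤ pstar l)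
    (ζ : ℝ) (Γ : ℕ → ℝ)
    (r : Fin K → Fin L → ℕ → ℝ)
    (hr0 : ∀ (k : Fin K) (l : Fin L) (y : ℕ), y ≤ C → 0 ≤ r k l y)
    (hr1 : ∀ (k : Fin K) (l : Fin L), ∑ y ∈ Finset.range (C + 1), r k l y = 1)
    (hΓ : ∀ (k : Fin K) (l : Fin L), ∀ y ∈ Finset.range (C + 1),
      Γ y ≥ pstar l * pg k * r k l y)
    (hζ : 1 - ∑ y ∈ Finset.range (C + 1), Γ y ≥ ζ)
    (e : Fin K → Fin L → ℝ)
    (he : ∀ k l, e k l = (1 / (C : ℝ)) * ∑ y ∈ Finset.range (C + 1),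
      (y : ℝ) * r k l y)
    (γ0 γ1 : ℝ)
    (hγ0 : γ0 = (1 / (C : ℝ)) * ∑ y ∈ Finset.range (C + 1),
      ((C : ℝ) - (y : ℝ)) * Γ y)
    (hγ1 : γ1 = (1 / (C : ℝ)) * ∑ y ∈ Finset.range (C + 1), (y : ℝ) * Γ y) :
    (1 - γ0 - γ1 ≥ ζ) ∧
    (∀ (k : Fin K) (l : Fin L), γ1 ≥ pstar l * pg k * e k l) ∧
    (∀ (k : Fin K) (l : Fin L), γ0 ≥ pstar l * pg k * (1 - e k l)) := by

  have hCpos : (0:ℝ) < (C:ℝ) := by exact_mod_cast hC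
  constructor
  · -- γ0 + γ1 = ∑ Γ
    have hsum : γ0 + γ1 = ∑ y ∈ Finset.range (C + 1), Γ y := by
      rw [hγ0, hγ1, ← mul_add, ← Finset.sum_add_distrib]
      have : ∀ y ∈ Finset.range (C+1),
          ((C:ℝ) - (y:ℝ)) * Γ y + (y:ℝ) * Γ y = (C:ℝ) * Γ y := by
        intro y _; ring
      rw [Finset.sum_congr rfl this, ← Finset.mul_sum]
      field_simp
    linarith [hsum]
  constructor
  · intro k l
    have h1 : pstar l * pg k * e k l
        = 1/(C:ℝ) * ∑ y ∈ Finset.range (C+1), (y:ℝ) * (pstar l * pg k * r k l y) := by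
      simp only [he, Finset.mul_sum]
      exact Finset.sum_congr rfl (fun y _ => by ring)
    rw [h1, hγ1]
    apply mul_le_mul_of_nonneg_left _ (by positivity : (0:ℝ) ≤ 1/(C:ℝ))
    apply Finset.sum_le_sum
    intro y hy
    exact mul_le_mul_of_nonneg_left (hΓ k l y hy) (by positivity)
  · intro k l
    have hs : ∑ y ∈ Finset.range (C+1), ((C:ℝ) - (y:ℝ)) * (pstar l * pg k * r k l y)
        = (C:ℝ) * (pstar l * pg k) * (∑ y ∈ Finset.range (C+1), r k l y)
          - pstar l * pg k * ∑ y ∈ Finset.range (C+1), (y:ℝ) * r k l y := by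
      rw [Finset.mul_sum, Finset.mul_sum, ← Finset.sum_sub_distrib]
      exact Finset.sum_congr rfl (fun y _ => by ring)
    have key : pstar l * pg k * (1 - e k l)
        = 1/(C:ℝ) * ∑ y ∈ Finset.range (C+1), ((C:ℝ)-(y:ℝ)) * (pstar l * pg k * r k l y) := by
      rw [hs, hr1, he]; field_simp
    rw [key, hγ0]
    apply mul_le_mul_of_nonneg_left _ (by positivity : (0:ℝ) ≤ 1/(C:ℝ))
    apply Finset.sum_le_sum
    intro y hy
    have hyC : (y:ℝ) ≤ (C:ℝ) := by
      exact_mod_cast Nat.lt_succ_iff.mp (Finset.mem_range.mp hy)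
    exact mul_le_mul_of_nonneg_left (hΓ k l y hy) (by linarith)
end

section
/- Let L ≥ 1, let n : Fin L → ℕ with n_l ≥ 1, let h and M be positive integers with h ≤ n_l for every l and h dividing M, and let e : Fin L → ℝ satisfy 1 − h/n_l ≤ e_l ≤ 1 for every l and ∑_{l} n_l · (1 − e_l) = M. Then there exists a pmf ǒ on the set F̌ = {ž : Fin L → ℕ | (∀ l, ž_l ∈ {0, h}) ∧ ∑_l ž_l = M} such that for every l, ∑_{ž ∈ F̌, ž_l = h} ǒ(ž) = n_l·(1 − e_l)/h; consequently, for every l, ∑_{ž ∈ F̌} ǒ(ž) · (1 − ž_l / n_l) = e_l. -/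
/-- The single-chunk feasible placement set
`F̌ = {ž : Fin L → ℕ | (∀ l, ž_l ∈ {0, h}) ∧ ∑_l ž_l = M}`, encoded with values
in `Fin (M+1)` (the bound `ž_l ≤ M` is automatic from `ž_l ∈ {0,h}`, `h ≤ M`,
and the sum constraint). -/
def FeasCheck (L h M : ℕ) : Finset (Fin L → Fin (M + 1)) :=
  Finset.univ.filter fun z =>
    (∀ l, (z l : ℕ) = 0 ∨ (z l : ℕ) = h) ∧ ∑ l, (z l : ℕ) = M

lemma exists_w (L m : ℕ) : ∀ k : ℕ, ∀ x : Fin L → ℝ,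
    (Finset.univ.filter fun l => x l ≠ 0 ∧ x l ≠ 1).card ≤ k →
    (∀ l, 0 ≤ x l ∧ x l ≤ 1) → (∑ l, x l = (m : ℝ)) →
    ∃ w : Finset (Fin L) → ℝ, (∀ s, 0 ≤ w s) ∧ (∀ s, s.card ≠ m → w s = 0) ∧
      (∑ s, w s = 1) ∧
      (∀ l, ∑ s ∈ Finset.univ.filter (fun s => l ∈ s), w s = x l) := by
  intro k
  induction k with
  | zero =>
    intro x hcard hb hs
    -- all coordinates are 0 or 1
    have hall : ∀ l, x l = 0 ∨ x l = 1 := by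
      intro l
      by_contra hc
      push_neg at hc
      have : l ∈ Finset.univ.filter fun l => x l ≠ 0 ∧ x l ≠ 1 := by
        simp [hc.1, hc.2]
      have := Finset.card_pos.mpr ⟨l, this⟩
      omega
    set S : Finset (Fin L) := Finset.univ.filter (fun l => x l = 1) with hS
    have hsum' : ∑ l, x l = (S.card : ℝ) := by
      rw [← Finset.sum_filter_add_sum_filter_not Finset.univ (fun l => x l = 1)]
      have h1 : ∑ l ∈ Finset.univ.filter (fun l => x l = 1), x l = (S.card : ℝ) := by
        rw [Finset.sum_congr rfl (fun l hl => (Finset.mem_filter.mp hl).2)]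
        simp [hS]
      have h2 : ∑ l ∈ Finset.univ.filter (fun l => ¬ x l = 1), x l = 0 := by
        apply Finset.sum_eq_zero
        intro l hl
        rcases hall l with h | h
        · exact h
        · exact absurd h (Finset.mem_filter.mp hl).2
      rw [h1, h2, add_zero]
    have hScard : S.card = m := by
      have : (S.card : ℝ) = (m : ℝ) := by rw [← hsum', hs]
      exact_mod_cast this
    refine ⟨fun s => if s = S then 1 else 0, ?_, ?_, ?_, ?_⟩
    · intro s; positivity
    · intro s hsm
      have : s ≠ S := by rintro rfl; exact hsm hScard
      simp [this]
    · simp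
    · intro l
      rw [Finset.sum_ite_eq' (Finset.univ.filter (fun s => l ∈ s)) S (fun _ => (1:ℝ))]
      by_cases hl : l ∈ S
      · simp only [Finset.mem_filter, Finset.mem_univ, true_and, hl, if_true]
        have : x l = 1 := (Finset.mem_filter.mp hl).2
        rw [this]
      · simp only [Finset.mem_filter, Finset.mem_univ, true_and, hl, if_false]
        rcases hall l with h | h
        · rw [h]
        · exact absurd (by simp [hS, h]) hl
  | succ k ih =>
    intro x hcard hb hs
    by_cases hempty : (Finset.univ.filter fun l => x l ≠ 0 ∧ x l ≠ 1) = ∅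
    · exact ih x (by rw [hempty]; simp) hb hs
    have hne : (Finset.univ.filter fun l => x l ≠ 0 ∧ x l ≠ 1).Nonempty :=
      Finset.nonempty_iff_ne_empty.mpr hempty
    classical
    set F := Finset.univ.filter fun l => x l ≠ 0 ∧ x l ≠ 1 with hF
    obtain ⟨i, hi⟩ := hne
    have hxi := (Finset.mem_filter.mp hi).2
    -- there is a second fractional coordinate
    have hj : ∃ j ∈ F, j ≠ i := by
      by_contra hcon
      push_neg at hcon
      have hother : ∀ l, l ≠ i → x l = 0 ∨ x l = 1 := by
        intro l hl
        by_contra hc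
        push_neg at hc
        exact hl (hcon l (by simp [hF, hc.1, hc.2]))
      set T := (Finset.univ.erase i).filter (fun l => x l = 1) with hT
      have hrest : ∑ l ∈ Finset.univ.erase i, x l = (T.card : ℝ) := by
        rw [← Finset.sum_filter_add_sum_filter_not (Finset.univ.erase i) (fun l => x l = 1)]
        have h1 : ∑ l ∈ (Finset.univ.erase i).filter (fun l => x l = 1), x l = (T.card : ℝ) := by
          rw [Finset.sum_congr rfl (fun l hl => (Finset.mem_filter.mp hl).2)]
          simp [hT]
        have h2 : ∑ l ∈ (Finset.univ.erase i).filter (fun l => ¬ x l = 1), x l = 0 := by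
          apply Finset.sum_eq_zero
          intro l hl
          have hl' := Finset.mem_filter.mp hl
          rcases hother l (Finset.ne_of_mem_erase hl'.1) with h | h
          · exact h
          · exact absurd h hl'.2
        rw [h1, h2, add_zero]
      have htot : x i + (T.card : ℝ) = (m : ℝ) := by
        rw [← hrest, ← hs]
        rw [← Finset.sum_erase_add Finset.univ x (Finset.mem_univ i)]
        ring
      have h0 : 0 < x i := lt_of_le_of_ne (hb i).1 (Ne.symm hxi.1)
      have h1 : x i < 1 := lt_of_le_of_ne (hb i).2 hxi.2
      rcases le_or_gt m T.card with hmc | hmc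
      · have : (m : ℝ) ≤ (T.card : ℝ) := by exact_mod_cast hmc
        linarith
      · have : (T.card : ℝ) + 1 ≤ (m : ℝ) := by exact_mod_cast hmc
        linarith
    obtain ⟨j, hjF, hji⟩ := hj
    have hxj := (Finset.mem_filter.mp hjF).2
    set a := x i with ha
    set b := x j with hbj
    have ha0 : 0 < a := lt_of_le_of_ne (hb i).1 (Ne.symm hxi.1)
    have ha1 : a < 1 := lt_of_le_of_ne (hb i).2 hxi.2
    have hb0 : 0 < b := lt_of_le_of_ne (hb j).1 (Ne.symm hxj.1)
    have hb1 : b < 1 := lt_of_le_of_ne (hb j).2 hxj.2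
    set t1 := min a (1 - b) with ht1
    set t2 := min (1 - a) b with ht2
    have ht1p : 0 < t1 := lt_min ha0 (by linarith)
    have ht2p : 0 < t2 := lt_min (by linarith) hb0
    set lam := t2 / (t1 + t2) with hlam
    have htsum : 0 < t1 + t2 := by linarith
    have hlam0 : 0 ≤ lam := by positivity
    have hlam1 : lam ≤ 1 := by
      rw [hlam, div_le_one htsum]; linarith
    -- the two perturbed vectors
    set x1 : Fin L → ℝ := fun l => x l + (if l = i then -t1 else 0) + (if l = j then t1 else 0) with hx1
    set x2 : Fin L → ℝ := fun l => x l + (if l = i then t2 else 0) + (if l = j then -t2 else 0) with hx2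
    have hij : i ≠ j := fun h => hji h.symm
    have hx1i : x1 i = a - t1 := by
      simp only [hx1, if_true]; rw [if_neg hij, ← ha]; ring
    have hx1j : x1 j = b + t1 := by
      simp only [hx1, if_true]; rw [if_neg hji, ← hbj]; ring
    have hx2i : x2 i = a + t2 := by
      simp only [hx2, if_true]; rw [if_neg hij, ← ha]; ring
    have hx2j : x2 j = b - t2 := by
      simp only [hx2, if_true]; rw [if_neg hji, ← hbj]; ring
    have hx1o : ∀ l, l ≠ i → l ≠ j → x1 l = x l := by intro l h1 h2; simp [hx1, h1, h2]
    have hx2o : ∀ l, l ≠ i → l ≠ j → x2 l = x l := by intro l h1 h2; simp [hx2, h1, h2]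
    -- bounds
    have hb1' : ∀ l, 0 ≤ x1 l ∧ x1 l ≤ 1 := by
      intro l
      by_cases h1 : l = i
      · subst h1; rw [hx1i]
        constructor
        · have : t1 ≤ a := min_le_left _ _
          linarith
        · linarith
      by_cases h2 : l = j
      · subst h2; rw [hx1j]
        constructor
        · linarith
        · have : t1 ≤ 1 - b := min_le_right _ _
          linarith
      · rw [hx1o l h1 h2]; exact hb l
    have hb2' : ∀ l, 0 ≤ x2 l ∧ x2 l ≤ 1 := by
      intro l
      by_cases h1 : l = i
      · subst h1; rw [hx2i]
        constructor
        · linarith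
        · have : t2 ≤ 1 - a := min_le_left _ _
          linarith
      by_cases h2 : l = j
      · subst h2; rw [hx2j]
        constructor
        · have : t2 ≤ b := min_le_right _ _
          linarith
        · linarith
      · rw [hx2o l h1 h2]; exact hb l
    -- sums
    have hsum1 : ∑ l, x1 l = (m : ℝ) := by
      simp only [hx1]
      rw [Finset.sum_add_distrib, Finset.sum_add_distrib, hs,
        Finset.sum_ite_eq' Finset.univ i (fun _ => -t1),
        Finset.sum_ite_eq' Finset.univ j (fun _ => t1)]
      simp
    have hsum2 : ∑ l, x2 l = (m : ℝ) := by
      simp only [hx2]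
      rw [Finset.sum_add_distrib, Finset.sum_add_distrib, hs,
        Finset.sum_ite_eq' Finset.univ i (fun _ => t2),
        Finset.sum_ite_eq' Finset.univ j (fun _ => -t2)]
      simp
    -- fractional sets shrink
    have hsub1 : (Finset.univ.filter fun l => x1 l ≠ 0 ∧ x1 l ≠ 1) ⊂ F := by
      constructor
      · intro l hl
        have hl' := (Finset.mem_filter.mp hl).2
        by_cases h1 : l = i
        · subst h1; exact hi
        by_cases h2 : l = j
        · subst h2; exact hjF
        · rw [hx1o l h1 h2] at hl'
          simp [hF, hl'.1, hl'.2]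
      · intro hsup
        rcases min_cases a (1 - b) with ⟨heq, _⟩ | ⟨heq, _⟩
        · have := (Finset.mem_filter.mp (hsup hi)).2.1
          rw [hx1i] at this
          apply this
          rw [ht1, heq]; ring
        · have := (Finset.mem_filter.mp (hsup hjF)).2.2
          rw [hx1j] at this
          apply this
          rw [ht1, heq]; ring
    have hsub2 : (Finset.univ.filter fun l => x2 l ≠ 0 ∧ x2 l ≠ 1) ⊂ F := by
      constructor
      · intro l hl
        have hl' := (Finset.mem_filter.mp hl).2
        by_cases h1 : l = i
        · subst h1; exact hi
        by_cases h2 : l = j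
        · subst h2; exact hjF
        · rw [hx2o l h1 h2] at hl'
          simp [hF, hl'.1, hl'.2]
      · intro hsup
        rcases min_cases (1 - a) b with ⟨heq, _⟩ | ⟨heq, _⟩
        · have := (Finset.mem_filter.mp (hsup hi)).2.2
          rw [hx2i] at this
          apply this
          rw [ht2, heq]; ring
        · have := (Finset.mem_filter.mp (hsup hjF)).2.1
          rw [hx2j] at this
          apply this
          rw [ht2, heq]; ring
    have hc1 : (Finset.univ.filter fun l => x1 l ≠ 0 ∧ x1 l ≠ 1).card ≤ k := by
      have := Finset.card_lt_card hsub1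
      omega
    have hc2 : (Finset.univ.filter fun l => x2 l ≠ 0 ∧ x2 l ≠ 1).card ≤ k := by
      have := Finset.card_lt_card hsub2
      omega
    obtain ⟨w1, hw1n, hw1z, hw1s, hw1m⟩ := ih x1 hc1 hb1' hsum1
    obtain ⟨w2, hw2n, hw2z, hw2s, hw2m⟩ := ih x2 hc2 hb2' hsum2
    -- convex combination recovers x
    have hconv : ∀ l, lam * x1 l + (1 - lam) * x2 l = x l := by
      intro l
      have key : lam * (-t1) + (1 - lam) * t2 = 0 := by
        rw [hlam]; field_simp; ring
      by_cases h1 : l = i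
      · subst h1; rw [hx1i, hx2i, ← ha]; linear_combination key
      by_cases h2 : l = j
      · subst h2; rw [hx1j, hx2j, ← hbj]; linear_combination (-1 : ℝ) * key
      · rw [hx1o l h1 h2, hx2o l h1 h2]; ring
    refine ⟨fun s => lam * w1 s + (1 - lam) * w2 s, ?_, ?_, ?_, ?_⟩
    · intro s
      have h1 := mul_nonneg hlam0 (hw1n s)
      have h2 := mul_nonneg (by linarith : (0:ℝ) ≤ 1 - lam) (hw2n s)
      dsimp only; linarith
    · intro s hsm
      dsimp only; rw [hw1z s hsm, hw2z s hsm]; ring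
    · rw [Finset.sum_add_distrib, ← Finset.mul_sum, ← Finset.mul_sum, hw1s, hw2s]; ring
    · intro l
      rw [Finset.sum_add_distrib, ← Finset.mul_sum, ← Finset.mul_sum, hw1m, hw2m, hconv]

/-- Existence step in the proof that SPC performance does not improve with the
number of chunks: given target per-subset miss probabilities `e_l` with
`1 − h/n_l ≤ e_l ≤ 1` and `∑_l n_l·(1 − e_l) = M`, there is a pmf `ǒ` on `F̌`
(placements caching `0` or `h` whole files per subset) with
`∑_{ž: ž_l = h} ǒ(ž) = n_l(1 − e_l)/h` for every `l`, and consequently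
`∑_ž ǒ(ž)·(1 − ž_l/n_l) = e_l` for every `l`. -/
theorem stmt14 (L h M : ℕ) (hL : 1 ≤ L) (hh : 1 ≤ h) (hM : 1 ≤ M)
    (n : Fin L → ℕ) (hn1 : ∀ l, 1 ≤ n l) (hhn : ∀ l, h ≤ n l) (hdvd : h ∣ M)
    (e : Fin L → ℝ)
    (he : ∀ l, 1 - (h : ℝ) / (n l : ℝ) ≤ e l ∧ e l ≤ 1)
    (hsum : ∑ l, (n l : ℝ) * (1 - e l) = (M : ℝ)) :
    ∃ o : (Fin L → Fin (M + 1)) → ℝ,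
      (∀ z ∈ FeasCheck L h M, 0 ≤ o z) ∧
      (∑ z ∈ FeasCheck L h M, o z = 1) ∧
      (∀ l : Fin L,
        ∑ z ∈ (FeasCheck L h M).filter (fun z => (z l : ℕ) = h), o z
          = (n l : ℝ) * (1 - e l) / (h : ℝ)) ∧
      (∀ l : Fin L,
        ∑ z ∈ FeasCheck L h M, o z * (1 - ((z l : ℕ) : ℝ) / (n l : ℝ))
          = e l) := by
  classical
  have hhM : h ≤ M := Nat.le_of_dvd hM hdvd
  have hhMlt : h < M + 1 := by omega
  set m := M / h with hmdef
  have hm : h * m = M := Nat.mul_div_cancel' hdvd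
  have hhR : (0 : ℝ) < (h : ℝ) := by exact_mod_cast hh
  -- target marginals
  set x : Fin L → ℝ := fun l => (n l : ℝ) * (1 - e l) / (h : ℝ) with hx
  have hxb : ∀ l, 0 ≤ x l ∧ x l ≤ 1 := by
    intro l
    have hn0 : (0 : ℝ) < (n l : ℝ) := by exact_mod_cast hn1 l
    have h1 := (he l).1
    have h2 := (he l).2
    constructor
    · apply div_nonneg _ (le_of_lt hhR)
      apply mul_nonneg (le_of_lt hn0); linarith
    · rw [hx]
      rw [div_le_one hhR]
      have h3 : 1 - e l ≤ (h : ℝ) / (n l : ℝ) := by linarith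
      calc (n l : ℝ) * (1 - e l) ≤ (n l : ℝ) * ((h : ℝ) / (n l : ℝ)) := by
            apply mul_le_mul_of_nonneg_left h3 (le_of_lt hn0)
        _ = (h : ℝ) := by field_simp
  have hxsum : ∑ l, x l = (m : ℝ) := by
    rw [hx]
    simp only
    rw [← Finset.sum_div, hsum]
    rw [div_eq_iff (ne_of_gt hhR), ← hm]
    push_cast; ring
  obtain ⟨w, hwn, hwz, hws, hwm⟩ := exists_w L m
    ((Finset.univ.filter fun l => x l ≠ 0 ∧ x l ≠ 1).card) x le_rfl hxb hxsum
  -- maps between FeasCheck and m-subsets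
  set sZ : (Fin L → Fin (M + 1)) → Finset (Fin L) :=
    fun z => Finset.univ.filter (fun l => (z l : ℕ) = h) with hsZ
  set ι : Finset (Fin L) → (Fin L → Fin (M + 1)) :=
    fun s l => if l ∈ s then (⟨h, hhMlt⟩ : Fin (M + 1)) else 0 with hι
  set T : Finset (Finset (Fin L)) := Finset.univ.filter (fun s => s.card = m) with hT
  have hzval : ∀ s : Finset (Fin L), ∀ l, ((ι s l : ℕ)) = if l ∈ s then h else 0 := by
    intro s l
    by_cases hl : l ∈ s <;> simp [hι, hl]
  have hmemT : ∀ z ∈ FeasCheck L h M, sZ z ∈ T := by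
    intro z hz
    obtain ⟨hz1, hz2⟩ := (Finset.mem_filter.mp hz).2
    have hsplit : ∑ l, (z l : ℕ) = (sZ z).card * h := by
      rw [← Finset.sum_filter_add_sum_filter_not Finset.univ (fun l => (z l : ℕ) = h)]
      have e1 : ∑ l ∈ Finset.univ.filter (fun l => (z l : ℕ) = h), (z l : ℕ)
          = (sZ z).card * h := by
        rw [Finset.sum_congr rfl (fun l hl => (Finset.mem_filter.mp hl).2)]
        simp [hsZ, mul_comm]
      have e2 : ∑ l ∈ Finset.univ.filter (fun l => ¬ (z l : ℕ) = h), (z l : ℕ) = 0 := by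
        apply Finset.sum_eq_zero
        intro l hl
        rcases hz1 l with h0 | h0
        · exact h0
        · exact absurd h0 (Finset.mem_filter.mp hl).2
      rw [e1, e2, add_zero]
    have hmm : (sZ z).card * h = m * h := by
      rw [← hsplit, hz2, mul_comm m h, hm]
    have hcard : (sZ z).card = m := Nat.eq_of_mul_eq_mul_right (by omega) hmm
    simp [hT, hcard]
  have hmemF : ∀ s ∈ T, ι s ∈ FeasCheck L h M := by
    intro s hs
    have hcard : s.card = m := (Finset.mem_filter.mp hs).2
    rw [FeasCheck, Finset.mem_filter]
    refine ⟨Finset.mem_univ _, fun l => ?_, ?_⟩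
    · rw [hzval]; by_cases hl : l ∈ s <;> simp [hl]
    · have e1 : ∑ l, ((ι s l : ℕ)) = ∑ l, (if l ∈ s then h else 0) :=
        Finset.sum_congr rfl (fun l _ => hzval s l)
      rw [e1, Finset.sum_ite_mem, Finset.univ_inter, Finset.sum_const, hcard,
        smul_eq_mul, mul_comm, hm]
  have hleft : ∀ z ∈ FeasCheck L h M, ι (sZ z) = z := by
    intro z hz
    obtain ⟨hz1, _⟩ := (Finset.mem_filter.mp hz).2
    funext l
    apply Fin.ext
    rw [hzval]
    by_cases hl : l ∈ sZ z
    · have := (Finset.mem_filter.mp hl).2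
      simp [hl, this]
    · have hne : ¬ ((z l : ℕ) = h) := fun hc => hl (by simp [hsZ, hc])
      rcases hz1 l with h0 | h0
      · simp [hl, h0]
      · exact absurd h0 hne
  have hright : ∀ s ∈ T, sZ (ι s) = s := by
    intro s hs
    ext l
    simp only [hsZ, Finset.mem_filter, Finset.mem_univ, true_and]
    rw [hzval]
    by_cases hl : l ∈ s
    · simp [hl]
    · simp [hl]; omega
  -- key facts about the candidate pmf
  have hone : ∑ z ∈ FeasCheck L h M, w (sZ z) = 1 := by
    rw [Finset.sum_nbij' sZ ι hmemT hmemF hleft hright (fun z _ => rfl)]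
    rw [hT, ← hws]
    apply Finset.sum_subset (Finset.filter_subset _ _)
    intro s _ hns
    apply hwz
    intro hc
    exact hns (by simp [hc])
  have hthird : ∀ l : Fin L,
      ∑ z ∈ (FeasCheck L h M).filter (fun z => (z l : ℕ) = h), w (sZ z) = x l := by
    intro l
    have key : ∑ z ∈ (FeasCheck L h M).filter (fun z => (z l : ℕ) = h), w (sZ z)
        = ∑ s ∈ T.filter (fun s => l ∈ s), w s := by
      apply Finset.sum_nbij' sZ ι
      · intro z hz
        obtain ⟨hz1, hz2⟩ := Finset.mem_filter.mp hz
        refine Finset.mem_filter.mpr ⟨hmemT z hz1, ?_⟩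
        simp [hsZ, hz2]
      · intro s hs
        obtain ⟨hs1, hs2⟩ := Finset.mem_filter.mp hs
        refine Finset.mem_filter.mpr ⟨hmemF s hs1, ?_⟩
        rw [hzval]; simp [hs2]
      · intro z hz; exact hleft z (Finset.mem_filter.mp hz).1
      · intro s hs; exact hright s (Finset.mem_filter.mp hs).1
      · intro z _; rfl
    rw [key, ← hwm l]
    apply Finset.sum_subset
    · intro s hs
      exact Finset.mem_filter.mpr ⟨Finset.mem_univ _, (Finset.mem_filter.mp hs).2⟩
    · intro s hs hns
      apply hwz
      intro hc
      exact hns (Finset.mem_filter.mpr ⟨by simp [hT, hc], (Finset.mem_filter.mp hs).2⟩)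
  refine ⟨fun z => w (sZ z), fun z _ => hwn _, hone, fun l => hthird l, ?_⟩
  intro l
  have hnl : (0 : ℝ) < (n l : ℝ) := by exact_mod_cast hn1 l
  have hsplit : ∑ z ∈ FeasCheck L h M, w (sZ z) * ((z l : ℕ) : ℝ)
      = (h : ℝ) * x l := by
    rw [← Finset.sum_filter_add_sum_filter_not (FeasCheck L h M) (fun z => (z l : ℕ) = h)]
    have e1 : ∑ z ∈ (FeasCheck L h M).filter (fun z => (z l : ℕ) = h),
        w (sZ z) * ((z l : ℕ) : ℝ) = (h : ℝ) * x l := by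
      have e1' : ∀ z ∈ (FeasCheck L h M).filter (fun z => (z l : ℕ) = h),
          w (sZ z) * ((z l : ℕ) : ℝ) = w (sZ z) * (h : ℝ) := by
        intro z hz
        rw [(Finset.mem_filter.mp hz).2]
      rw [Finset.sum_congr rfl e1', ← Finset.sum_mul, hthird l]
      ring
    have e2 : ∑ z ∈ (FeasCheck L h M).filter (fun z => ¬ (z l : ℕ) = h),
        w (sZ z) * ((z l : ℕ) : ℝ) = 0 := by
      apply Finset.sum_eq_zero
      intro z hz
      obtain ⟨hz1, hz2⟩ := Finset.mem_filter.mp hz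
      obtain ⟨hp1, _⟩ := (Finset.mem_filter.mp hz1).2
      rcases hp1 l with h0 | h0
      · rw [h0]; simp
      · exact absurd h0 hz2
    rw [e1, e2, add_zero]
  have hterm : ∀ z, w (sZ z) * (1 - ((z l : ℕ) : ℝ) / (n l : ℝ))
      = w (sZ z) - (w (sZ z) * ((z l : ℕ) : ℝ)) / (n l : ℝ) := by
    intro z; ring
  rw [Finset.sum_congr rfl (fun z _ => hterm z), Finset.sum_sub_distrib, hone,
    ← Finset.sum_div, hsplit, hx]
  simp only
  field_simp
  ring
end

section
/- Let L ≥ 3, C ≥ 1 and 2 ≤ m ≤ L − 1, let pg : Fin K → ℝ with pg_k ≥ 0, let p*_1 ≥ p*_2 ≥ … ≥ p*_L ≥ 0, let n_m ≥ 1 and 0 < z_m ≤ n_m·C. Consider the deterministic SPC placement that caches all chunks of subsets S_1, …, S_{m−1}, exactly z_m chunks chosen uniformly at random from the n_m·C chunks of subset S_m, and no chunks from subsets S_{m+1}, …, S_L; its conditional observation laws are r_l(0) = 1 (and r_l(y) = 0 otherwise) for l ≤ m−1; r_l(C) = 1 (and r_l(y) = 0 otherwise) for l ≥ m+1; and r_m(y)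 = (C choose (C−y))·((n_m C − C) choose (z_m − (C−y))) / ((n_m C) choose z_m) for 0 ≤ y ≤ C. Then the privacy degree Ψ = 1 − ∑_{y=0}^{C} max_{l,k} pg_k · p*_l · r_l(y) equals 1 − p*_1·pg^max − max{ (((n_m C − C) choose z_m)/((n_m C) choose z_m))·p*_m·pg^max , p*_{m+1}·pg^max } − p*_m·pg^max·( 1 − (((n_m C − C) choose (z_m − C)) + ((n_m C − C) choose z_m)) / ((n_m C) choose z_m) ), where pg^max = max_k pg_k. -/
/-- Binomial coefficient with an integer lower index, following the convention
that the coefficient vanishes for a negative lower index (and `Nat.choose`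
already vanishes when the lower index exceeds the upper one). -/
def chooseZ (a : ℕ) (b : ℤ) : ℕ := if 0 ≤ b then a.choose b.toNat else 0

lemma chooseZ_natCast (a z : ℕ) : chooseZ a (z : ℤ) = a.choose z := by
  simp [chooseZ]

lemma chooseZ_neg (a : ℕ) {b : ℤ} (h : b < 0) : chooseZ a b = 0 := by
  simp [chooseZ, not_le.mpr h]

/-- Vandermonde's identity with the `chooseZ` convention. -/
lemma vanderZ (c z a : ℕ) :
    ∑ j ∈ Finset.range (c + 1), c.choose j * chooseZ a ((z : ℤ) - j)
      = (c + a).choose z := by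
  have h1 : ∑ j ∈ Finset.range (c + 1), c.choose j * chooseZ a ((z : ℤ) - j)
      = ∑ j ∈ Finset.range (max c z + 1), c.choose j * chooseZ a ((z : ℤ) - j) := by
    apply Finset.sum_subset (Finset.range_subset_range.mpr (by omega))
    intro x hx hx'
    have : c < x := by simp only [Finset.mem_range] at hx hx'; omega
    simp [Nat.choose_eq_zero_of_lt this]
  have h2 : (c + a).choose z
      = ∑ j ∈ Finset.range (z + 1), c.choose j * chooseZ a ((z : ℤ) - j) := by
    rw [Nat.add_choose_eq, Finset.Nat.sum_antidiagonal_eq_sum_range_succ_mk]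
    apply Finset.sum_congr rfl
    intro j hj
    have hj2 : j ≤ z := Nat.lt_succ_iff.mp (Finset.mem_range.mp hj)
    have h4 : ((z : ℤ) - j) = ((z - j : ℕ) : ℤ) := by omega
    simp only [h4, chooseZ_natCast]
  have h3 : ∑ j ∈ Finset.range (z + 1), c.choose j * chooseZ a ((z : ℤ) - j)
      = ∑ j ∈ Finset.range (max c z + 1), c.choose j * chooseZ a ((z : ℤ) - j) := by
    apply Finset.sum_subset (Finset.range_subset_range.mpr (by omega))
    intro x hx hx'
    have hz : z < x := by simp only [Finset.mem_range] at hx hx'; omega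
    rw [chooseZ_neg a (by omega : (z:ℤ) - x < 0), mul_zero]
  rw [h1, h2, h3]

/-- Minimum privacy degree of SPC (subsets indexed `1,…,L`, popularities of
the subsets' most popular files nonincreasing): for the deterministic
placement caching subsets `S_1,…,S_{m−1}` entirely, `z_m` uniformly random
chunks of the `n_m·C` chunks of `S_m`, and nothing from `S_{m+1},…,S_L`, the
privacy degree `Ψ = 1 − ∑_{y=0}^{C} max_{l,k} pg_k·p*_l·r_l(y)` equals
`1 − p*_1·pg^max − max{ ((n_mC−C choose z_m)/(n_mC choose z_m))·p*_m·pg^max,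
p*_{m+1}·pg^max } − p*_m·pg^max·(1 − ((n_mC−C choose z_m−C) +
(n_mC−C choose z_m))/(n_mC choose z_m))`. -/
theorem stmt15 (K L C m : ℕ) (hK : 1 ≤ K) (hL : 3 ≤ L) (hC : 1 ≤ C)
    (hm2 : 2 ≤ m) (hmL : m ≤ L - 1)
    (pg : Fin K → ℝ) (hpg0 : ∀ k, 0 ≤ pg k)
    (pstar : ℕ → ℝ)
    (hpstar0 : ∀ l ∈ Finset.Icc 1 L, 0 ≤ pstar l)
    (hpmono : ∀ l l' : ℕ, 1 ≤ l → l ≤ l' → l' ≤ L → pstar l' ≤ pstar l)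
    (nm zm : ℕ) (hnm : 1 ≤ nm) (hzm0 : 0 < zm) (hzm : zm ≤ nm * C)
    (r : ℕ → ℕ → ℝ)
    (hrlow : ∀ l : ℕ, 1 ≤ l → l ≤ m - 1 →
      r l 0 = 1 ∧ ∀ y : ℕ, y ≠ 0 → r l y = 0)
    (hrhigh : ∀ l : ℕ, m + 1 ≤ l → l ≤ L →
      r l C = 1 ∧ ∀ y : ℕ, y ≠ C → r l y = 0)
    (hrm : ∀ y : ℕ, y ≤ C →
      r m y = ((C.choose (C - y)
          * chooseZ (nm * C - C) ((zm : ℤ) - ((C : ℤ) - (y : ℤ))) : ℕ) : ℝ)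
        / (((nm * C).choose zm : ℕ) : ℝ))
    (hne : ((Finset.Icc 1 L) ×ˢ (Finset.univ : Finset (Fin K))).Nonempty)
    (hneK : (Finset.univ : Finset (Fin K)).Nonempty) :
    1 - ∑ y ∈ Finset.range (C + 1),
        ((Finset.Icc 1 L) ×ˢ (Finset.univ : Finset (Fin K))).sup' hne
          (fun lk : ℕ × Fin K => pg lk.2 * pstar lk.1 * r lk.1 y)
      = 1 - pstar 1 * (Finset.univ.sup' hneK pg)
        - max
            ((((nm * C - C).choose zm : ℕ) : ℝ)
                / (((nm * C).choose zm : ℕ) : ℝ)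
              * pstar m * (Finset.univ.sup' hneK pg))
            (pstar (m + 1) * (Finset.univ.sup' hneK pg))
        - pstar m * (Finset.univ.sup' hneK pg)
          * (1 - ((chooseZ (nm * C - C) ((zm : ℤ) - (C : ℤ))
              + (nm * C - C).choose zm : ℕ) : ℝ)
            / (((nm * C).choose zm : ℕ) : ℝ)) := by
  classical
  set P := Finset.univ.sup' hneK pg with hPdef
  obtain ⟨k0, -, hk0⟩ := Finset.exists_mem_eq_sup' hneK pg
  have hpgle : ∀ k, pg k ≤ P := fun k => Finset.le_sup' pg (Finset.mem_univ k)
  have hP0 : 0 ≤ P := le_trans (hpg0 k0) (hpgle k0)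
  have hmem1 : (1 : ℕ) ∈ Finset.Icc 1 L := Finset.mem_Icc.mpr ⟨le_refl 1, by omega⟩
  have hmemm : m ∈ Finset.Icc 1 L := Finset.mem_Icc.mpr ⟨by omega, by omega⟩
  have hmemm1 : m + 1 ∈ Finset.Icc 1 L := Finset.mem_Icc.mpr ⟨by omega, by omega⟩
  have hps1 : 0 ≤ pstar 1 := hpstar0 1 hmem1
  have hpsm : 0 ≤ pstar m := hpstar0 m hmemm
  have hpsm1 : 0 ≤ pstar (m + 1) := hpstar0 _ hmemm1
  have hpm_le : pstar m ≤ pstar 1 := hpmono 1 m le_rfl (by omega) (by omega)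
  have hDpos : (0 : ℝ) < (((nm * C).choose zm : ℕ) : ℝ) := by
    exact_mod_cast Nat.choose_pos hzm
  set D : ℝ := (((nm * C).choose zm : ℕ) : ℝ) with hDdef
  set A := nm * C - C with hAdef
  have hCle : C ≤ nm * C := Nat.le_mul_of_pos_left C (by omega)
  have hCA : C + A = nm * C := by omega
  -- Vandermonde: sum of numerators
  have hNum : ∑ y ∈ Finset.range (C + 1),
      C.choose (C - y) * chooseZ A ((zm : ℤ) - ((C : ℤ) - (y : ℤ)))
      = (nm * C).choose zm := by
    have hrefl := Finset.sum_range_reflect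
      (fun j => C.choose j * chooseZ A ((zm : ℤ) - j)) (C + 1)
    calc ∑ y ∈ Finset.range (C + 1),
          C.choose (C - y) * chooseZ A ((zm : ℤ) - ((C : ℤ) - (y : ℤ)))
        = ∑ y ∈ Finset.range (C + 1),
          (fun j => C.choose j * chooseZ A ((zm : ℤ) - j)) (C + 1 - 1 - y) := by
          apply Finset.sum_congr rfl
          intro y hy
          have hy' : y ≤ C := Nat.lt_succ_iff.mp (Finset.mem_range.mp hy)
          simp only
          have h1 : C + 1 - 1 - y = C - y := by omega
          have h2 : ((zm : ℤ) - ((C : ℤ) - (y : ℤ))) = (zm : ℤ) - ((C - y : ℕ) : ℤ) := by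
            omega
          rw [h1, h2]
      _ = ∑ j ∈ Finset.range (C + 1), C.choose j * chooseZ A ((zm : ℤ) - j) := hrefl
      _ = (C + A).choose zm := vanderZ C zm A
      _ = (nm * C).choose zm := by rw [hCA]
  -- values of r at m
  have hrm0 : r m 0 = ((chooseZ A ((zm : ℤ) - (C : ℤ)) : ℕ) : ℝ) / D := by
    rw [hrm 0 (Nat.zero_le C)]
    simp [Nat.choose_self]
  have hrmC : r m C = ((A.choose zm : ℕ) : ℝ) / D := by
    rw [hrm C le_rfl]
    simp [chooseZ_natCast]
  have hrm_nonneg : ∀ y, y ≤ C → 0 ≤ r m y := by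
    intro y hy
    rw [hrm y hy]
    positivity
  have hrm0_le1 : r m 0 ≤ 1 := by
    have hterm : chooseZ A ((zm : ℤ) - (C : ℤ)) ≤ (nm * C).choose zm := by
      rw [← hNum]
      have h0 : chooseZ A ((zm : ℤ) - (C : ℤ))
          = C.choose (C - 0) * chooseZ A ((zm : ℤ) - ((C : ℤ) - ((0 : ℕ) : ℤ))) := by
        simp [Nat.choose_self]
      rw [h0]
      exact Finset.single_le_sum
        (f := fun y => C.choose (C - y) * chooseZ A ((zm : ℤ) - ((C : ℤ) - (y : ℤ))))
        (fun i _ => Nat.zero_le _)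
        (show (0 : ℕ) ∈ Finset.range (C + 1) from Finset.mem_range.mpr (by omega))
    rw [hrm0, div_le_one hDpos]
    exact Nat.cast_le.mpr hterm
  have hrsum : ∑ y ∈ Finset.range (C + 1), r m y = 1 := by
    have h1 : ∑ y ∈ Finset.range (C + 1), r m y
        = (∑ y ∈ Finset.range (C + 1),
            ((C.choose (C - y) * chooseZ A ((zm : ℤ) - ((C : ℤ) - (y : ℤ))) : ℕ) : ℝ)) / D := by
      rw [Finset.sum_div]
      apply Finset.sum_congr rfl
      intro y hy
      exact hrm y (Nat.lt_succ_iff.mp (Finset.mem_range.mp hy))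
    rw [h1, ← Nat.cast_sum, hNum]
    exact div_self (ne_of_gt hDpos)
  -- the sup' function
  set S : ℕ → ℝ := fun y => ((Finset.Icc 1 L) ×ˢ (Finset.univ : Finset (Fin K))).sup' hne
    (fun lk : ℕ × Fin K => pg lk.2 * pstar lk.1 * r lk.1 y) with hSdef
  have hS0 : S 0 = pstar 1 * P := by
    apply le_antisymm
    · apply Finset.sup'_le
      rintro ⟨l, k⟩ hlk
      rw [Finset.mem_product, Finset.mem_Icc] at hlk
      obtain ⟨⟨hl1, hlL⟩, -⟩ := hlk
      simp only
      rcases lt_trichotomy l m with hlt | heq | hgt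
      · rw [(hrlow l hl1 (by omega)).1, mul_one]
        calc pg k * pstar l ≤ P * pstar 1 :=
              mul_le_mul (hpgle k) (hpmono 1 l le_rfl hl1 hlL)
                (hpstar0 l (Finset.mem_Icc.mpr ⟨hl1, hlL⟩)) hP0
          _ = pstar 1 * P := mul_comm _ _
      · rw [heq]
        calc pg k * pstar m * r m 0 ≤ (P * pstar 1) * 1 :=
              mul_le_mul (mul_le_mul (hpgle k) hpm_le hpsm hP0) hrm0_le1
                (hrm_nonneg 0 (Nat.zero_le C)) (mul_nonneg hP0 hps1)
          _ = pstar 1 * P := by ring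
      · rw [(hrhigh l (by omega) hlL).2 0 (by omega), mul_zero]
        exact mul_nonneg hps1 hP0
    · have hmem : ((1 : ℕ), k0) ∈ (Finset.Icc 1 L) ×ˢ (Finset.univ : Finset (Fin K)) :=
        Finset.mem_product.mpr ⟨hmem1, Finset.mem_univ _⟩
      have h := Finset.le_sup'
        (fun lk : ℕ × Fin K => pg lk.2 * pstar lk.1 * r lk.1 0) hmem
      simp only at h
      rw [(hrlow 1 le_rfl (by omega)).1, mul_one, ← hk0] at h
      calc pstar 1 * P = P * pstar 1 := mul_comm _ _
        _ ≤ S 0 := h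
  have hSC : S C = max (((A.choose zm : ℕ) : ℝ) / D * pstar m * P) (pstar (m + 1) * P) := by
    apply le_antisymm
    · apply Finset.sup'_le
      rintro ⟨l, k⟩ hlk
      rw [Finset.mem_product, Finset.mem_Icc] at hlk
      obtain ⟨⟨hl1, hlL⟩, -⟩ := hlk
      simp only
      rcases lt_trichotomy l m with hlt | heq | hgt
      · rw [(hrlow l hl1 (by omega)).2 C (by omega), mul_zero]
        exact le_max_of_le_right (mul_nonneg hpsm1 hP0)
      · rw [heq]
        have h1 : pg k * pstar m * r m C ≤ ((A.choose zm : ℕ) : ℝ) / D * pstar m * P := by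
          rw [hrmC]
          have h2 : pg k * pstar m * (((A.choose zm : ℕ) : ℝ) / D)
              ≤ P * pstar m * (((A.choose zm : ℕ) : ℝ) / D) :=
            mul_le_mul_of_nonneg_right (mul_le_mul_of_nonneg_right (hpgle k) hpsm)
              (by positivity)
          calc pg k * pstar m * (((A.choose zm : ℕ) : ℝ) / D)
              ≤ P * pstar m * (((A.choose zm : ℕ) : ℝ) / D) := h2
            _ = ((A.choose zm : ℕ) : ℝ) / D * pstar m * P := by ring
        exact le_max_of_le_left h1
      · rw [(hrhigh l (by omega) hlL).1, mul_one]
        refine le_max_of_le_right ?_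
        calc pg k * pstar l ≤ P * pstar (m + 1) :=
              mul_le_mul (hpgle k) (hpmono (m + 1) l (by omega) (by omega) hlL)
                (hpstar0 l (Finset.mem_Icc.mpr ⟨hl1, hlL⟩)) hP0
          _ = pstar (m + 1) * P := mul_comm _ _
    · apply max_le
      · have hmem : ((m : ℕ), k0) ∈ (Finset.Icc 1 L) ×ˢ (Finset.univ : Finset (Fin K)) :=
          Finset.mem_product.mpr ⟨hmemm, Finset.mem_univ _⟩
        have h := Finset.le_sup'
          (fun lk : ℕ × Fin K => pg lk.2 * pstar lk.1 * r lk.1 C) hmem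
        simp only at h
        rw [hrmC, ← hk0] at h
        calc ((A.choose zm : ℕ) : ℝ) / D * pstar m * P
            = P * pstar m * (((A.choose zm : ℕ) : ℝ) / D) := by ring
          _ ≤ S C := h
      · have hmem : ((m + 1 : ℕ), k0) ∈ (Finset.Icc 1 L) ×ˢ (Finset.univ : Finset (Fin K)) :=
          Finset.mem_product.mpr ⟨hmemm1, Finset.mem_univ _⟩
        have h := Finset.le_sup'
          (fun lk : ℕ × Fin K => pg lk.2 * pstar lk.1 * r lk.1 C) hmem
        simp only at h
        rw [(hrhigh (m + 1) le_rfl (by omega)).1, mul_one, ← hk0] at h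
        calc pstar (m + 1) * P = P * pstar (m + 1) := mul_comm _ _
          _ ≤ S C := h
  have hSmid : ∀ y, 0 < y → y < C → S y = pstar m * P * r m y := by
    intro y hy0 hyC
    have hrny : 0 ≤ r m y := hrm_nonneg y (le_of_lt hyC)
    apply le_antisymm
    · apply Finset.sup'_le
      rintro ⟨l, k⟩ hlk
      rw [Finset.mem_product, Finset.mem_Icc] at hlk
      obtain ⟨⟨hl1, hlL⟩, -⟩ := hlk
      simp only
      rcases lt_trichotomy l m with hlt | heq | hgt
      · rw [(hrlow l hl1 (by omega)).2 y (by omega), mul_zero]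
        exact mul_nonneg (mul_nonneg hpsm hP0) hrny
      · rw [heq]
        calc pg k * pstar m * r m y ≤ P * pstar m * r m y :=
              mul_le_mul_of_nonneg_right (mul_le_mul_of_nonneg_right (hpgle k) hpsm) hrny
          _ = pstar m * P * r m y := by ring
      · rw [(hrhigh l (by omega) hlL).2 y (by omega), mul_zero]
        exact mul_nonneg (mul_nonneg hpsm hP0) hrny
    · have hmem : ((m : ℕ), k0) ∈ (Finset.Icc 1 L) ×ˢ (Finset.univ : Finset (Fin K)) :=
        Finset.mem_product.mpr ⟨hmemm, Finset.mem_univ _⟩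
      have h := Finset.le_sup'
        (fun lk : ℕ × Fin K => pg lk.2 * pstar lk.1 * r lk.1 y) hmem
      simp only at h
      rw [← hk0] at h
      calc pstar m * P * r m y = P * pstar m * r m y := by ring
        _ ≤ S y := h
  -- split the sum
  have hsub : ({0, C} : Finset ℕ) ⊆ Finset.range (C + 1) := by
    intro x hx
    simp only [Finset.mem_insert, Finset.mem_singleton] at hx
    rcases hx with rfl | rfl <;> simp [Finset.mem_range] <;> omega
  have hsplit : ∑ y ∈ Finset.range (C + 1), (S y - pstar m * P * r m y)
      = (S 0 - pstar m * P * r m 0) + (S C - pstar m * P * r m C) := by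
    rw [← Finset.sum_subset hsub ?_, Finset.sum_pair (show (0 : ℕ) ≠ C by omega)]
    intro y hy hy'
    have hy2 : 0 < y ∧ y < C := by
      simp only [Finset.mem_range, Finset.mem_insert, Finset.mem_singleton, not_or] at hy hy'
      omega
    rw [hSmid y hy2.1 hy2.2]
    ring
  have htot : ∑ y ∈ Finset.range (C + 1), S y
      = (∑ y ∈ Finset.range (C + 1), pstar m * P * r m y)
        + ((S 0 - pstar m * P * r m 0) + (S C - pstar m * P * r m C)) := by
    rw [← hsplit, ← Finset.sum_add_distrib]
    apply Finset.sum_congr rfl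
    intro y hy
    ring
  have hg : ∑ y ∈ Finset.range (C + 1), pstar m * P * r m y = pstar m * P := by
    rw [← Finset.mul_sum, hrsum, mul_one]
  show 1 - ∑ y ∈ Finset.range (C + 1), S y = _
  rw [htot, hg, hS0, hSC, hrm0, hrmC]
  push_cast
  ring
end
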